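/- arXiv:2510.02921 — 2 statements merged into one kernel-verified Lean document; each statement's English description precedes it below -/
import Mathlib

section
/- Let (𝕋^d,𝔅,μ,T) and (𝕋^d,𝔅,μ,S) be measure-preserving systems with the same invariant measure μ ≪ ℒ^d, both satisfying the Lusin–Lipschitz assumption d(F(x),F(y)) ≤ e^{g_F(x)+g_F(y)} d(x,y) with g_F ∈ L^p(μ). Then T∘S is μ-a.e. approximately differentiable and the chain rule ap∇(T∘S)(x) = ap∇T(S(x)) · ap∇S(x) holds for μ-a.e. x. -/
open MeasureTheory Filter
open scoped ENNReal

noncomputable section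

instance : Fact ((0:ℝ) < 1) := ⟨one_pos⟩

/-- The `d`-dimensional torus. -/
abbrev Torus (d : ℕ) := Fin d → AddCircle (1 : ℝ)

/-- The representative of a point of the circle in `(-1/2, 1/2]`-style lift. -/
def tlift (x : AddCircle (1 : ℝ)) : ℝ :=
  let r : ℝ := (AddCircle.equivIco 1 0 x : ℝ)
  if r ≤ 1 / 2 then r else r - 1

/-- Lift of a torus point (e.g. of a small difference of torus points) to `ℝ^d`. -/
def vlift {d : ℕ} (x : Torus d) : EuclideanSpace ℝ (Fin d) := WithLp.toLp 2 (fun i => tlift (x i))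

/-- A measurable set has density one at `x`. -/
def DensityOneAt {d : ℕ} (E : Set (Torus d)) (x : Torus d) : Prop :=
  Tendsto (fun r : ℝ => volume (E ∩ Metric.ball x r) / volume (Metric.ball x r))
    (nhdsWithin 0 (Set.Ioi 0)) (nhds 1)

/-- `T` is approximately differentiable at `x` with approximate differential `A`:
the approximate limit of `|T(y) - T(x) - A(y-x)|/|y-x|` as `y → x` is `0`. -/
def ApproxDerivAt {d : ℕ} (T : Torus d → Torus d) (x : Torus d)
    (A : EuclideanSpace ℝ (Fin d) →L[ℝ] EuclideanSpace ℝ (Fin d)) : Prop :=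
  ∃ E : Set (Torus d), MeasurableSet E ∧ DensityOneAt E x ∧
    Tendsto (fun y => ‖vlift (T y - T x) - A (vlift (y - x))‖ / ‖vlift (y - x)‖)
      (nhdsWithin x (E \ {x})) (nhds 0)

namespace ACR
open Metric Set

abbrev Wd (d : ℕ) := Fin d → ℝ

def emb {d : ℕ} (v : Wd d) : Torus d := fun i => (v i : AddCircle (1:ℝ))

def wlift {d : ℕ} (x : Torus d) : Wd d := fun i => tlift (x i)

lemma tlift_mem (z : AddCircle (1:ℝ)) : tlift z ∈ Set.Ioc (-(1/2):ℝ) (1/2) := by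
  have h := (AddCircle.equivIco (1:ℝ) 0 z).2
  simp only [Set.mem_Ico, zero_add] at h
  unfold tlift
  by_cases hr : (AddCircle.equivIco (1:ℝ) 0 z : ℝ) ≤ 1/2
  · rw [if_pos hr]; exact ⟨by linarith [h.1], hr⟩
  · rw [if_neg hr]; push_neg at hr
    exact ⟨by linarith, by linarith [h.2]⟩

lemma coe_tlift (z : AddCircle (1:ℝ)) : ((tlift z : ℝ) : AddCircle (1:ℝ)) = z := by
  have h : (((AddCircle.equivIco (1:ℝ) 0 z : ℝ) : ℝ) : AddCircle (1:ℝ)) = z := by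
    conv_rhs => rw [← (AddCircle.equivIco (1:ℝ) 0).symm_apply_apply z]
    rfl
  unfold tlift
  by_cases hr : (AddCircle.equivIco (1:ℝ) 0 z : ℝ) ≤ 1/2
  · rw [if_pos hr]; exact h
  · rw [if_neg hr]
    push_cast
    rw [sub_eq_add_neg, AddCircle.coe_add]
    simp only [h]
    have : ((-1 : ℝ) : AddCircle (1:ℝ)) = 0 := by
      have h2 : ((-1 : ℝ) : AddCircle (1:ℝ)) = -(((1:ℝ)) : AddCircle (1:ℝ)) := rfl
      rw [h2, AddCircle.coe_period, neg_zero]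
    rw [this, add_zero]

lemma tlift_coe (s : ℝ) (hs : s ∈ Set.Ioc (-(1/2):ℝ) (1/2)) :
    tlift ((s : ℝ) : AddCircle (1:ℝ)) = s := by
  have h1 : ((tlift ((s : ℝ) : AddCircle (1:ℝ)) : ℝ) : AddCircle (1:ℝ)) = (s : AddCircle (1:ℝ)) :=
    coe_tlift _
  set t := tlift ((s : ℝ) : AddCircle (1:ℝ)) with ht
  have hmem := tlift_mem ((s : ℝ) : AddCircle (1:ℝ))
  rw [← ht] at hmem
  have h2 : ((t - s : ℝ) : AddCircle (1:ℝ)) = 0 := by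
    rw [AddCircle.coe_sub, h1, sub_self]
  obtain ⟨n, hn⟩ := (AddCircle.coe_eq_zero_iff (1:ℝ)).mp h2
  have hn' : (n : ℝ) = t - s := by simpa using hn
  have hlt : |(n : ℝ)| < 1 := by
    rw [hn', abs_lt]
    constructor <;> linarith [hmem.1, hmem.2, hs.1, hs.2]
  have hn0 : n = 0 := by
    have h3 : |n| < 1 := by exact_mod_cast (by push_cast; exact hlt : ((|n| : ℤ) : ℝ) < 1)
    rw [abs_lt] at h3; omega
  rw [hn0] at hn'
  simp at hn'
  linarith

lemma tlift_zero : tlift (0 : AddCircle (1:ℝ)) = 0 := by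
  have : ((0:ℝ) : AddCircle (1:ℝ)) = 0 := by norm_num
  rw [← this, tlift_coe 0 (by norm_num)]

lemma norm_eq_tlift (z : AddCircle (1:ℝ)) : ‖z‖ = |tlift z| := by
  conv_lhs => rw [← coe_tlift z]
  rw [AddCircle.norm_eq]
  have hmem := tlift_mem z
  rcases eq_or_lt_of_le hmem.2 with h | h
  · rw [h]; norm_num [round_eq]
  · have : round (1⁻¹ * tlift z) = 0 := by
      rw [round_eq_zero_iff]
      constructor
      · simpa using le_of_lt hmem.1
      · simpa using h
    rw [this]; norm_num

lemma tlift_sub (a b : AddCircle (1:ℝ)) (h : |tlift a - tlift b| < 1/2) :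
    tlift (a - b) = tlift a - tlift b := by
  have hc : ((tlift a - tlift b : ℝ) : AddCircle (1:ℝ)) = a - b := by
    rw [AddCircle.coe_sub, coe_tlift, coe_tlift]
  rw [← hc, tlift_coe]
  rw [abs_lt] at h
  exact ⟨h.1, le_of_lt h.2⟩

variable {d : ℕ}

lemma emb_wlift (x : Torus d) : emb (wlift x) = x := funext fun i => coe_tlift _

lemma wlift_emb {v : Wd d} (hv : ∀ i, v i ∈ Set.Ioc (-(1/2):ℝ) (1/2)) :
    wlift (emb v) = v := funext fun i => tlift_coe _ (hv i)

lemma emb_add (v w : Wd d) : emb (v + w) = emb v + emb w := rfl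

lemma emb_zero : emb (0 : Wd d) = 0 := by
  funext i
  show ((0:ℝ) : AddCircle (1:ℝ)) = 0
  norm_num

lemma dist_eq_norm_wlift (x y : Torus d) : dist x y = ‖wlift (x - y)‖ := by
  rw [dist_pi_def, Pi.norm_def]
  congr 1
  apply Finset.sup_congr rfl
  intro i _
  have : nndist (x i) (y i) = ‖x i - y i‖₊ := by
    rw [← nndist_eq_nnnorm]
  rw [this]
  ext
  show ‖x i - y i‖ = ‖wlift (x - y) i‖
  rw [norm_eq_tlift]
  rfl

lemma norm_wlift_eq (x : Torus d) : ‖wlift x‖ = dist x 0 := by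
  rw [dist_eq_norm_wlift, sub_zero]

lemma abs_wlift_le (x : Torus d) (i : Fin d) : |wlift x i| ≤ dist x 0 := by
  rw [← norm_wlift_eq]
  exact norm_le_pi_norm (wlift x) i

lemma wlift_sub (x y : Torus d) (hx : dist x 0 < 1/4) (hy : dist y 0 < 1/4) :
    wlift (x - y) = wlift x - wlift y := by
  funext i
  show tlift ((x - y) i) = wlift x i - wlift y i
  have : (x - y) i = x i - y i := rfl
  rw [this]
  apply tlift_sub
  have h1 := abs_wlift_le x i
  have h2 := abs_wlift_le y i
  have := abs_sub (wlift x i) (wlift y i)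
  show |wlift x i - wlift y i| < 1/2
  calc |wlift x i - wlift y i| ≤ |wlift x i| + |wlift y i| := abs_sub _ _
    _ < 1/2 := by linarith

-- vlift coordinates agree with wlift
lemma vlift_apply (x : Torus d) (i : Fin d) : vlift x i = wlift x i := rfl

lemma norm_pi_le_eucl (ve : EuclideanSpace ℝ (Fin d)) (w : Wd d) (h : ∀ i, w i = ve i) :
    ‖w‖ ≤ ‖ve‖ := by
  apply (pi_norm_le_iff_of_nonneg (norm_nonneg ve)).mpr
  intro i
  rw [h i]
  show |ve i| ≤ ‖ve‖
  rw [EuclideanSpace.norm_eq]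
  calc |ve i| = Real.sqrt (‖ve i‖ ^ 2) := by
        rw [Real.sqrt_sq_eq_abs, abs_norm]; rfl
    _ ≤ Real.sqrt (∑ j, ‖ve j‖ ^ 2) := by
        apply Real.sqrt_le_sqrt
        exact Finset.single_le_sum (f := fun j => ‖ve j‖ ^ 2) (fun j _ => by positivity)
          (Finset.mem_univ i)

lemma norm_eucl_le_pi (ve : EuclideanSpace ℝ (Fin d)) (w : Wd d) (h : ∀ i, w i = ve i) :
    ‖ve‖ ≤ Real.sqrt d * ‖w‖ := by
  rw [EuclideanSpace.norm_eq]
  have hb : ∀ i, ‖ve i‖ ^ 2 ≤ ‖w‖ ^ 2 := by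
    intro i
    have h1 : |ve i| ≤ ‖w‖ := by rw [← h i]; exact norm_le_pi_norm w i
    have h2 : (0:ℝ) ≤ |ve i| := abs_nonneg _
    calc ‖ve i‖ ^ 2 = |ve i| ^ 2 := rfl
      _ ≤ ‖w‖ ^ 2 := by nlinarith
  calc Real.sqrt (∑ i, ‖ve i‖ ^ 2) ≤ Real.sqrt (∑ _i : Fin d, ‖w‖ ^ 2) := by
        apply Real.sqrt_le_sqrt
        exact Finset.sum_le_sum fun i _ => hb i
    _ = Real.sqrt (d * ‖w‖ ^ 2) := by rw [Finset.sum_const, Finset.card_univ, Fintype.card_fin,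
        nsmul_eq_mul]
    _ = Real.sqrt d * ‖w‖ := by
        rw [Real.sqrt_mul (by positivity), Real.sqrt_sq (norm_nonneg w)]

def tbox (d : ℕ) : Set (Wd d) := Set.univ.pi fun _ => Set.Ioc (-(1/2):ℝ) (1/2)

lemma tbox_measurable : MeasurableSet (tbox d) :=
  MeasurableSet.univ_pi fun _ => measurableSet_Ioc

lemma measurable_tlift : Measurable tlift := by
  have h1 : Measurable (fun z => (AddCircle.equivIco (1:ℝ) 0 z : ℝ)) :=
    measurable_subtype_coe.comp (AddCircle.measurableEquivIco (1:ℝ) 0).measurable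
  unfold tlift
  exact Measurable.ite (measurableSet_le h1 measurable_const) h1 (h1.sub measurable_const)

lemma measurable_wlift : Measurable (wlift : Torus d → Wd d) :=
  measurable_pi_lambda _ fun i => measurable_tlift.comp (measurable_pi_apply i)

lemma continuous_emb : Continuous (emb : Wd d → Torus d) :=
  continuous_pi fun i => continuous_quotient_mk'.comp (continuous_apply i)

lemma measurable_emb : Measurable (emb : Wd d → Torus d) := continuous_emb.measurable

instance : IsProbabilityMeasure (volume : Measure (Torus d)) := by
  constructor
  rw [volume_pi, Measure.pi_univ]
  simp [AddCircle.measure_univ]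

lemma measurePreserving_emb :
    MeasurePreserving (emb : Wd d → Torus d) (volume.restrict (tbox d)) volume := by
  have hcoord : ∀ _i : Fin d, MeasurePreserving (fun r : ℝ => (r : AddCircle (1:ℝ)))
      ((volume : Measure ℝ).restrict (Set.Ioc (-(1/2):ℝ) (1/2))) volume := by
    intro i
    have h := AddCircle.measurePreserving_mk (1:ℝ) (-(1/2))
    have : -(1/2) + (1:ℝ) = 1/2 := by norm_num
    rwa [this] at h
  have h := measurePreserving_pi
    (fun _ : Fin d => (volume : Measure ℝ).restrict (Set.Ioc (-(1/2):ℝ) (1/2)))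
    (fun _ => (volume : Measure (AddCircle (1:ℝ)))) hcoord
  have hpi1 : Measure.pi (fun _ : Fin d => (volume : Measure ℝ).restrict
      (Set.Ioc (-(1/2):ℝ) (1/2))) = (volume : Measure (Wd d)).restrict (tbox d) := by
    apply Measure.pi_eq
    intro s hs
    rw [Measure.restrict_apply (MeasurableSet.univ_pi hs)]
    have : Set.univ.pi s ∩ tbox d = Set.univ.pi fun i => s i ∩ Set.Ioc (-(1/2):ℝ) (1/2) := by
      rw [tbox, ← Set.pi_inter_distrib]
    rw [this, volume_pi_pi]
    congr 1
    funext i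
    rw [Measure.restrict_apply (hs i)]
  have hpi2 : Measure.pi (fun _ : Fin d => (volume : Measure (AddCircle (1:ℝ))))
      = (volume : Measure (Torus d)) := volume_pi.symm
  rw [hpi1, hpi2] at h
  exact h

lemma measurePreserving_wlift :
    MeasurePreserving (wlift : Torus d → Wd d) volume (volume.restrict (tbox d)) := by
  refine ⟨measurable_wlift, ?_⟩
  have hme := measurePreserving_emb (d := d)
  conv_lhs => rw [← hme.map_eq]
  rw [Measure.map_map measurable_wlift measurable_emb]
  have heq : (wlift ∘ emb : Wd d → Wd d) =ᵐ[volume.restrict (tbox d)] id := by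
    rw [Filter.EventuallyEq, ae_restrict_iff' (tbox_measurable)]
    apply ae_of_all
    intro v hv
    exact wlift_emb fun i => hv i (Set.mem_univ i)
  rw [Measure.map_congr heq, Measure.map_id]

lemma measurePreserving_chart (x : Torus d) :
    MeasurePreserving (fun v : Wd d => x + emb v) (volume.restrict (tbox d)) volume := by
  have h2 : MeasurePreserving (fun z : Torus d => x + z) volume volume :=
    measurePreserving_add_left volume x
  exact h2.comp measurePreserving_emb

lemma ball_subset_tbox {r : ℝ} (hr : r ≤ 1/2) : ball (0 : Wd d) r ⊆ tbox d := by
  intro w hw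
  intro i _
  have h1 : |w i| ≤ ‖w‖ := by
    have := norm_le_pi_norm w i
    simpa using this
  have h2 : ‖w‖ < r := by simpa [dist_eq_norm] using hw
  have := abs_lt.mp (lt_of_le_of_lt h1 h2)
  exact ⟨by linarith, by linarith⟩

lemma dist_chart (x : Torus d) {w : Wd d} (hw : w ∈ tbox d) :
    dist (x + emb w) x = ‖w‖ := by
  have h1 : dist (x + emb w) x = dist (emb w) 0 := by
    conv_lhs => rw [show (x : Torus d) = x + 0 by rw [add_zero]]
    rw [show x + 0 + emb w = x + emb w by rw [add_zero]]
    exact dist_add_left x (emb w) 0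
  rw [h1, ← norm_wlift_eq, wlift_emb fun i => hw i (Set.mem_univ i)]

lemma chart_preimage_ball (x : Torus d) {r : ℝ} (hr : r ≤ 1/2) :
    (fun v : Wd d => x + emb v) ⁻¹' (ball x r) ∩ tbox d = ball (0 : Wd d) r := by
  ext w
  simp only [Set.mem_inter_iff, Set.mem_preimage, mem_ball]
  constructor
  · rintro ⟨h1, h2⟩
    rw [dist_chart x h2] at h1
    simpa [dist_eq_norm]
  · intro hw
    have hw' : ‖w‖ < r := by simpa [dist_eq_norm] using hw
    have hmem := ball_subset_tbox hr (by simpa [dist_eq_norm] using hw' : w ∈ ball (0:Wd d) r)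
    refine ⟨?_, hmem⟩
    rw [dist_chart x hmem]
    exact hw'

lemma setLIntegral_ball_chart (x : Torus d) {g : Torus d → ℝ≥0∞} (hg : Measurable g)
    {r : ℝ} (hr : r ≤ 1/2) :
    ∫⁻ y in ball x r, g y = ∫⁻ w in ball (0 : Wd d) r, g (x + emb w) := by
  have hc := measurePreserving_chart x
  have hballm : MeasurableSet (ball x r) := measurableSet_ball
  conv_lhs => rw [← hc.map_eq]
  rw [← lintegral_indicator hballm, lintegral_map (hg.indicator hballm) hc.measurable]
  have : ∀ v : Wd d, (ball x r).indicator g (x + emb v)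
      = ((fun v : Wd d => x + emb v) ⁻¹' (ball x r)).indicator (fun v => g (x + emb v)) v := by
    intro v
    simp only [Set.indicator, Set.mem_preimage]
    rfl
  simp_rw [this]
  have hpm : MeasurableSet ((fun v : Wd d => x + emb v) ⁻¹' (ball x r)) :=
    measurableSet_ball.preimage (measurable_const.add measurable_emb)
  rw [lintegral_indicator hpm]
  rw [Measure.restrict_restrict hpm, chart_preimage_ball x hr]

lemma volume_ball_torus (x : Torus d) {r : ℝ} (hr : r ≤ 1/2) :
    volume (ball x r) = volume (ball (0 : Wd d) r) := by
  have h := setLIntegral_ball_chart x (g := fun _ => 1) measurable_const hr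
  simpa using h

lemma volume_ball_W (v : Wd d) {r : ℝ} (hr0 : 0 < r) :
    volume (ball v r) = ENNReal.ofReal (2*r) ^ d := by
  rw [ball_pi _ hr0, volume_pi, Measure.pi_pi]
  simp [Real.volume_ball, Finset.prod_const]

lemma volume_closedBall_W (v : Wd d) {r : ℝ} (hr0 : 0 ≤ r) :
    volume (closedBall v r) = ENNReal.ofReal (2*r) ^ d := by
  rw [closedBall_pi _ hr0, volume_pi, Measure.pi_pi]
  simp [Real.volume_closedBall, Finset.prod_const]

lemma ball_ae_closedBall (v : Wd d) {r : ℝ} (hr0 : 0 < r) :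
    (ball v r : Set (Wd d)) =ᵐ[volume] closedBall v r := by
  have hsub : ball v r ⊆ closedBall v r := ball_subset_closedBall
  have h1 : volume (closedBall v r \ ball v r) = 0 := by
    rw [measure_diff hsub measurableSet_ball.nullMeasurableSet
      (by rw [volume_ball_W v hr0]; exact ENNReal.pow_ne_top ENNReal.ofReal_ne_top)]
    rw [volume_ball_W v hr0, volume_closedBall_W v hr0.le, tsub_self]
  exact (ae_eq_set.mpr ⟨by simp [Set.diff_eq_empty.mpr hsub], h1⟩)

def obox (d : ℕ) : Set (Wd d) := Set.univ.pi fun _ => Set.Ioo (-(1/2):ℝ) (1/2)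

lemma obox_open : IsOpen (obox d) := isOpen_set_pi Set.finite_univ fun _ _ => isOpen_Ioo

lemma obox_subset_tbox : obox d ⊆ tbox d :=
  Set.pi_mono fun i _ => Set.Ioo_subset_Ioc_self

lemma ae_tbox_obox : ∀ᵐ v ∂((volume : Measure (Wd d)).restrict (tbox d)), v ∈ obox d := by
  rw [ae_restrict_iff' tbox_measurable]
  have hnull : (volume : Measure (Wd d)) (tbox d \ obox d) = 0 := by
    have hsub : tbox d \ obox d ⊆ (Set.univ.pi fun _ : Fin d => Set.Icc (-(1/2):ℝ) (1/2)) \ obox d := by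
      apply Set.diff_subset_diff_left
      exact Set.pi_mono fun i _ => Set.Ioc_subset_Icc_self
    apply measure_mono_null hsub
    have h1 : (volume : Measure (Wd d)) (Set.univ.pi fun _ : Fin d => Set.Icc (-(1/2):ℝ) (1/2)) = 1 := by
      rw [volume_pi, Measure.pi_pi]
      simp [Real.volume_Icc]
      norm_num
    have h2 : (volume : Measure (Wd d)) (obox d) = 1 := by
      rw [obox, volume_pi, Measure.pi_pi]
      simp [Real.volume_Ioo]
      norm_num
    have hsub2 : obox d ⊆ Set.univ.pi fun _ : Fin d => Set.Icc (-(1/2):ℝ) (1/2) :=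
      Set.pi_mono fun i _ => Set.Ioo_subset_Icc_self
    rw [measure_diff hsub2 (obox_open.measurableSet.nullMeasurableSet)
      (by rw [h2]; exact ENNReal.one_ne_top), h1, h2, tsub_self]
  have h0 : ∀ᵐ v ∂(volume : Measure (Wd d)), v ∉ tbox d \ obox d :=
    measure_eq_zero_iff_ae_notMem.mp hnull
  filter_upwards [h0] with v hv hvt
  by_contra hvo
  exact hv ⟨hvt, hvo⟩

/-- Lebesgue differentiation theorem on the torus, for balls. -/
theorem torus_diff {d : ℕ} (g : Torus d → ℝ≥0∞) (hg : Measurable g)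
    (hfin : (∫⁻ y, g y : ℝ≥0∞) ≠ ∞) :
    ∀ᵐ x ∂(volume : Measure (Torus d)),
      Tendsto (fun r : ℝ => (∫⁻ y in Metric.ball x r, g y) / volume (Metric.ball x r))
        (nhdsWithin 0 (Set.Ioi 0)) (nhds (g x)) := by
  classical
  set G : Wd d → ℝ≥0∞ := fun v => g (emb v) with hG
  have hGm : Measurable G := hg.comp measurable_emb
  set ν : Measure (Wd d) := volume.withDensity ((tbox d).indicator G) with hν
  have hνfin : IsFiniteMeasure ν := by
    constructor
    rw [hν, withDensity_apply _ MeasurableSet.univ, Measure.restrict_univ,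
      lintegral_indicator tbox_measurable]
    have := (measurePreserving_emb (d := d)).lintegral_comp hg
    rw [this]
    exact lt_of_le_of_ne le_top hfin
  have h1 := Besicovitch.ae_tendsto_rnDeriv ν volume
  have h2 : ν.rnDeriv volume =ᵐ[volume] (tbox d).indicator G :=
    Measure.rnDeriv_withDensity volume (hGm.indicator tbox_measurable)
  -- W-side statement
  have hW : ∀ᵐ v ∂(volume : Measure (Wd d)), v ∈ obox d →
      Tendsto (fun r : ℝ => (∫⁻ y in Metric.ball (emb v) r, g y) / volume (Metric.ball (emb v) r))
        (nhdsWithin 0 (Set.Ioi 0)) (nhds (G v)) := by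
    filter_upwards [h1, h2] with v hv1 hv2 hvo
    obtain ⟨ε, hε0, hεsub⟩ : ∃ ε > 0, Metric.ball v ε ⊆ obox d :=
      Metric.isOpen_iff.mp obox_open v hvo
    rw [hv2] at hv1
    rw [Set.indicator_of_mem (obox_subset_tbox hvo)] at hv1
    apply hv1.congr'
    have hmem : Set.Ioo (0:ℝ) (min (ε/2) (1/2)) ∈ nhdsWithin (0:ℝ) (Set.Ioi 0) :=
      Ioo_mem_nhdsGT_of_mem ⟨le_refl 0, by positivity⟩
    filter_upwards [hmem] with r hr
    have hr0 : 0 < r := hr.1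
    have hr12 : r ≤ 1/2 := le_of_lt (lt_of_lt_of_le hr.2 (min_le_right _ _))
    have hrε : r < ε := lt_of_lt_of_le (lt_of_lt_of_le hr.2 (min_le_left _ _)) (by linarith)
    have hcb : Metric.closedBall v r ⊆ tbox d := by
      intro u hu
      apply obox_subset_tbox
      apply hεsub
      rw [Metric.mem_closedBall] at hu
      rw [Metric.mem_ball]
      linarith
    -- numerator
    have hnum : ν (Metric.closedBall v r) = ∫⁻ y in Metric.ball (emb v) r, g y := by
      rw [hν, withDensity_apply _ measurableSet_closedBall]
      rw [setLIntegral_ball_chart (emb v) hg hr12]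
      have e1 : ∀ w : Wd d, g (emb v + emb w) = G (v + w) := by
        intro w; rw [hG]; rw [← emb_add]
      simp_rw [e1]
      -- translate
      have e2 : (∫⁻ w in Metric.ball (0 : Wd d) r, G (v + w)) = ∫⁻ u in Metric.ball v r, G u := by
        rw [← lintegral_indicator measurableSet_ball, ← lintegral_indicator measurableSet_ball]
        have : ∀ w : Wd d, (Metric.ball (0:Wd d) r).indicator (fun w => G (v + w)) w
            = (Metric.ball v r).indicator G (v + w) := by
          intro w
          simp only [Set.indicator]
          have : v + w ∈ Metric.ball v r ↔ w ∈ Metric.ball (0:Wd d) r := by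
            simp [Metric.mem_ball, dist_eq_norm]
          by_cases hw : w ∈ Metric.ball (0:Wd d) r
          · rw [if_pos hw, if_pos (this.mpr hw)]
          · rw [if_neg hw, if_neg (fun hc => hw (this.mp hc))]
        simp_rw [this]
        exact (lintegral_add_left_eq_self (fun u => (Metric.ball v r).indicator G u) v)
      rw [e2]
      -- ball = closedBall a.e.
      rw [setLIntegral_congr (ball_ae_closedBall v hr0)]
      -- indicator = G on closedBall
      apply setLIntegral_congr_fun measurableSet_closedBall
      exact fun u hu => Set.indicator_of_mem (hcb hu) G
    -- denominator
    have hden : volume (Metric.closedBall v r) = volume (Metric.ball (emb v) r) := by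
      rw [volume_closedBall_W v hr0.le, volume_ball_torus (emb v) hr12, volume_ball_W 0 hr0]
    rw [← hnum, ← hden]
  -- transfer to torus
  have hWres : ∀ᵐ v ∂((volume : Measure (Wd d)).restrict (tbox d)),
      Tendsto (fun r : ℝ => (∫⁻ y in Metric.ball (emb v) r, g y) / volume (Metric.ball (emb v) r))
        (nhdsWithin 0 (Set.Ioi 0)) (nhds (G v)) := by
    filter_upwards [ae_restrict_of_ae hW, ae_tbox_obox] with v hv hvo
    exact hv hvo
  have htrans := (measurePreserving_wlift (d := d)).quasiMeasurePreserving.ae hWres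
  filter_upwards [htrans] with x hx
  simp only [hG, emb_wlift] at hx
  exact hx

lemma emb_sub (v w : Wd d) : emb (v - w) = emb v - emb w := rfl

lemma norm_wlift_eq' (z : Torus d) : ‖wlift z‖ = ‖z‖ := by
  rw [norm_wlift_eq, dist_zero_right]

/-- The core approximate differentiability statement for maps Lipschitz on a set. -/
theorem core {d : ℕ} (f : Torus d → Torus d) (F : Set (Torus d)) (hF : MeasurableSet F)
    (K : ℝ) (hK : 1 ≤ K)
    (hf : ∀ a ∈ F, ∀ b ∈ F, dist (f a) (f b) ≤ K * dist a b) :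
    ∀ᵐ x ∂((volume : Measure (Torus d)).restrict F),
      ∃ A : EuclideanSpace ℝ (Fin d) →L[ℝ] EuclideanSpace ℝ (Fin d),
        Tendsto (fun y => ‖vlift (f y - f x) - A (vlift (y - x))‖ / ‖vlift (y - x)‖)
          (nhdsWithin x (F \ {x})) (nhds 0) := by
  classical
  have hK0 : 0 < K := lt_of_lt_of_le one_pos hK
  set δ : ℝ := 1/(16*K) with hδdef
  have hδ0 : 0 < δ := by positivity
  have hδ16 : δ ≤ 1/16 := by
    rw [hδdef]
    rw [div_le_div_iff₀ (by positivity) (by norm_num)]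
    nlinarith
  have hδhalf : δ ≤ 1/2 := by linarith
  obtain ⟨t, _tsub, tfin, hcov⟩ :=
    finite_cover_balls_of_compact (isCompact_univ : IsCompact (Set.univ : Set (Torus d))) hδ0
  suffices h : ∀ m ∈ t, ∀ᵐ x ∂((volume : Measure (Torus d)).restrict (F ∩ ball m δ)),
      ∃ A : EuclideanSpace ℝ (Fin d) →L[ℝ] EuclideanSpace ℝ (Fin d),
        Tendsto (fun y => ‖vlift (f y - f x) - A (vlift (y - x))‖ / ‖vlift (y - x)‖)
          (nhdsWithin x (F \ {x})) (nhds 0) by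
    have h' : ∀ᵐ x ∂(volume : Measure (Torus d)), ∀ m ∈ t, x ∈ F ∩ ball m δ →
        ∃ A : EuclideanSpace ℝ (Fin d) →L[ℝ] EuclideanSpace ℝ (Fin d),
          Tendsto (fun y => ‖vlift (f y - f x) - A (vlift (y - x))‖ / ‖vlift (y - x)‖)
            (nhdsWithin x (F \ {x})) (nhds 0) := by
      rw [ae_ball_iff tfin.countable]
      intro m hm
      rw [← ae_restrict_iff' (hF.inter measurableSet_ball)]
      exact h m hm
    rw [ae_restrict_iff' hF]
    filter_upwards [h'] with x hx hxF
    have : x ∈ ⋃ m ∈ t, ball m δ := hcov (Set.mem_univ x)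
    obtain ⟨m, hm, hxm⟩ := Set.mem_iUnion₂.mp this
    exact hx m hm ⟨hxF, hxm⟩
  intro m _hm
  by_cases hne : (F ∩ ball m δ).Nonempty
  swap
  · rw [Set.not_nonempty_iff_eq_empty] at hne
    rw [hne]
    simp
  obtain ⟨a, haF, ham⟩ := hne
  set w0 := f a with hw0
  set ψ : Wd d → Torus d := fun u => m + emb u with hψ
  set D : Set (Wd d) := ball (0 : Wd d) δ ∩ ψ ⁻¹' F with hDdef
  have hDm : MeasurableSet D :=
    measurableSet_ball.inter (hF.preimage (measurable_const.add measurable_emb))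
  have hDtbox : ∀ u ∈ D, u ∈ tbox d := fun u hu => ball_subset_tbox hδhalf hu.1
  have hdistψ : ∀ u ∈ D, dist (ψ u) m = ‖u‖ := fun u hu => dist_chart m (hDtbox u hu)
  have hballψ : ∀ u ∈ D, ψ u ∈ F ∩ ball m δ := by
    intro u hu
    refine ⟨hu.2, ?_⟩
    rw [mem_ball, hdistψ u hu]
    simpa [dist_eq_norm] using hu.1
  have claim2 : ∀ u ∈ D, dist (f (ψ u)) w0 ≤ 1/8 := by
    intro u hu
    have h1 : dist (f (ψ u)) w0 ≤ K * dist (ψ u) a := hf _ (hballψ u hu).1 _ haF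
    have h2 : dist (ψ u) a ≤ dist (ψ u) m + dist a m := by
      calc dist (ψ u) a ≤ dist (ψ u) m + dist m a := dist_triangle _ _ _
        _ = dist (ψ u) m + dist a m := by rw [dist_comm m a]
    have h3 : dist (ψ u) m < δ := by
      have := (hballψ u hu).2
      rwa [mem_ball] at this
    have h4 : dist (ψ u) a ≤ 2 * δ := by linarith [mem_ball.mp ham]
    calc dist (f (ψ u)) w0 ≤ K * dist (ψ u) a := h1
      _ ≤ K * (2 * δ) := by
          exact mul_le_mul_of_nonneg_left h4 hK0.le
      _ = 1/8 := by rw [hδdef]; field_simp; ring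
  set h0 : Wd d → Wd d := fun u => wlift (f (ψ u) - w0) with hh0
  have hLip : LipschitzOnWith (Real.toNNReal K) h0 D := by
    rw [lipschitzOnWith_iff_dist_le_mul]
    intro u hu u' hu'
    have hz : dist (f (ψ u) - w0) 0 < 1/4 := by
      rw [dist_zero_right, ← dist_eq_norm]
      exact lt_of_le_of_lt (claim2 u hu) (by norm_num)
    have hz' : dist (f (ψ u') - w0) 0 < 1/4 := by
      rw [dist_zero_right, ← dist_eq_norm]
      exact lt_of_le_of_lt (claim2 u' hu') (by norm_num)
    have e1 : h0 u - h0 u' = wlift (f (ψ u) - f (ψ u')) := by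
      rw [hh0]
      dsimp only
      rw [← wlift_sub _ _ hz hz', sub_sub_sub_cancel_right]
    rw [dist_eq_norm, e1, norm_wlift_eq', ← dist_eq_norm]
    have e2 : dist u u' = dist (ψ u) (ψ u') := by
      have husub : ∀ i, (u - u') i ∈ Set.Ioc (-(1/2):ℝ) (1/2) := by
        intro i
        have h1 : |(u - u') i| ≤ ‖u - u'‖ := by
          have := norm_le_pi_norm (u - u') i
          simpa using this
        have h2 : ‖u - u'‖ < 2 * δ := by
          calc ‖u - u'‖ ≤ ‖u‖ + ‖u'‖ := norm_sub_le _ _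
            _ < δ + δ := by
                have hu1 : ‖u‖ < δ := by simpa [dist_eq_norm] using hu.1
                have hu2 : ‖u'‖ < δ := by simpa [dist_eq_norm] using hu'.1
                linarith
            _ = 2 * δ := by ring
        have h3 : ‖u - u'‖ < 1/2 := lt_of_lt_of_le h2 (by linarith)
        have := abs_lt.mp (lt_of_le_of_lt h1 h3)
        exact ⟨this.1, this.2.le⟩
      rw [hψ]
      dsimp only
      rw [dist_add_left, dist_eq_norm, dist_eq_norm, ← emb_sub,
        ← norm_wlift_eq' (emb (u - u')), wlift_emb husub]
    rw [Real.coe_toNNReal K hK0.le, e2]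
    exact hf _ (hballψ u hu).1 _ (hballψ u' hu').1
  obtain ⟨h1, h1lip, hEq⟩ := hLip.extend_pi
  have hRad : ∀ᵐ u ∂(volume : Measure (Wd d)), DifferentiableAt ℝ h1 u :=
    h1lip.ae_differentiableAt
  set Ψ : Torus d → Wd d := fun x => wlift (x - m) with hΨ
  have hsubm : MeasurePreserving (fun x : Torus d => x - m) volume volume := by
    have h := measurePreserving_add_right (volume : Measure (Torus d)) (-m)
    have : (fun x : Torus d => x - m) = fun x : Torus d => x + (-m) := by
      funext x; rw [sub_eq_add_neg]
    rwa [← this] at h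
  have hΨmp : MeasurePreserving Ψ volume ((volume : Measure (Wd d)).restrict (tbox d)) :=
    measurePreserving_wlift.comp hsubm
  have hRad' : ∀ᵐ x ∂(volume : Measure (Torus d)), DifferentiableAt ℝ h1 (Ψ x) :=
    hΨmp.quasiMeasurePreserving.ae (ae_restrict_of_ae hRad)
  rw [ae_restrict_iff' (hF.inter measurableSet_ball)]
  filter_upwards [hRad'] with x hdiff hxmem
  obtain ⟨hxF, hxm⟩ := hxmem
  set u0 : Wd d := Ψ x with hu0def
  have hnu0 : ‖u0‖ = dist x m := by
    rw [hu0def, hΨ]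
    dsimp only
    rw [norm_wlift_eq, dist_eq_norm, sub_zero, ← dist_eq_norm]
  have hu0D : u0 ∈ D := by
    constructor
    · rw [mem_ball, dist_eq_norm, sub_zero, hnu0]
      exact mem_ball.mp hxm
    · show ψ u0 ∈ F
      have : ψ u0 = x := by
        rw [hψ, hu0def, hΨ]
        dsimp only
        rw [emb_wlift, add_sub_cancel]
      rwa [this]
  have hψu0 : ψ u0 = x := by
    rw [hψ, hu0def, hΨ]
    dsimp only
    rw [emb_wlift, add_sub_cancel]
  set A' : Wd d →L[ℝ] Wd d := fderiv ℝ h1 u0 with hA'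
  set L : EuclideanSpace ℝ (Fin d) ≃L[ℝ] Wd d := PiLp.continuousLinearEquiv 2 ℝ (fun _ : Fin d => ℝ) with hL
  refine ⟨(L.symm.toContinuousLinearMap.comp A').comp L.toContinuousLinearMap, ?_⟩
  set A : EuclideanSpace ℝ (Fin d) →L[ℝ] EuclideanSpace ℝ (Fin d) :=
    (L.symm.toContinuousLinearMap.comp A').comp L.toContinuousLinearMap with hA
  have hAco : ∀ (z : EuclideanSpace ℝ (Fin d)) (i : Fin d),
      A z i = A' (fun j => z j) i := fun z i => rfl
  have hquot : Tendsto (fun u : Wd d => ‖u - u0‖⁻¹ * ‖h1 u - h1 u0 - A' (u - u0)‖)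
      (nhds u0) (nhds 0) := hasFDerivAt_iff_tendsto.mp hdiff.hasFDerivAt
  have hmap : Tendsto (fun y : Torus d => u0 + wlift (y - x)) (nhdsWithin x (F \ {x}))
      (nhds u0) := by
    apply tendsto_iff_dist_tendsto_zero.mpr
    have he : ∀ y : Torus d, dist (u0 + wlift (y - x)) u0 = dist y x := by
      intro y
      rw [dist_eq_norm, add_sub_cancel_left, norm_wlift_eq, dist_eq_norm, sub_zero,
        ← dist_eq_norm]
    simp_rw [he]
    have : Tendsto (fun y : Torus d => dist y x) (nhds x) (nhds (dist x x)) :=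
      (continuous_id.dist continuous_const).tendsto x
    rw [dist_self] at this
    exact this.mono_left nhdsWithin_le_nhds
  have hcomp := hquot.comp hmap
  set ε0 : ℝ := δ - dist x m with hε0def
  have hε00 : 0 < ε0 := by
    rw [hε0def]
    have := mem_ball.mp hxm
    linarith
  apply squeeze_zero' (f := fun y => ‖vlift (f y - f x) - A (vlift (y - x))‖ / ‖vlift (y - x)‖)
    (g := fun y => Real.sqrt d * (‖(u0 + wlift (y - x)) - u0‖⁻¹ *
      ‖h1 (u0 + wlift (y - x)) - h1 u0 - A' ((u0 + wlift (y - x)) - u0)‖))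
  · apply Filter.Eventually.of_forall
    intro y
    positivity
  · have hev : ∀ᶠ y in nhdsWithin x (F \ {x}), dist y x < ε0 ∧ y ∈ F \ {x} := by
      apply Filter.Eventually.and
      · apply Filter.Eventually.filter_mono nhdsWithin_le_nhds
        have hmem := Metric.ball_mem_nhds x hε00
        filter_upwards [hmem] with y hy
        exact mem_ball.mp hy
      · exact eventually_mem_nhdsWithin
    filter_upwards [hev] with y hy
    have hdyx : dist y x < ε0 := hy.1
    have hyF : y ∈ F := hy.2.1
    have hyx' : y ≠ x := hy.2.2
    set w : Wd d := wlift (y - x) with hwdef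
    have hnw : ‖w‖ = dist y x := by
      rw [hwdef, norm_wlift_eq, dist_eq_norm, sub_zero, ← dist_eq_norm]
    have hnwpos : 0 < ‖w‖ := by
      rw [hnw]
      exact dist_pos.mpr hyx'
    set uy : Wd d := u0 + w with huydef
    have huyD : uy ∈ D := by
      constructor
      · rw [mem_ball, dist_eq_norm, sub_zero]
        calc ‖uy‖ ≤ ‖u0‖ + ‖w‖ := norm_add_le _ _
          _ < dist x m + ε0 := by
              rw [hnw, hnu0]
              linarith
          _ = δ := by rw [hε0def]; ring
      · show ψ uy ∈ F
        have : ψ uy = y := by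
          rw [hψ, huydef]
          dsimp only
          rw [emb_add]
          rw [hu0def, hΨ, hwdef]
          dsimp only
          rw [emb_wlift, emb_wlift]
          abel
        rwa [this]
    have hψuy : ψ uy = y := by
      rw [hψ, huydef]
      dsimp only
      rw [emb_add, hu0def, hΨ, hwdef]
      dsimp only
      rw [emb_wlift, emb_wlift]
      abel
    -- h values
    have hfy : h0 uy = wlift (f y - w0) := by rw [hh0]; dsimp only; rw [hψuy]
    have hfx : h0 u0 = wlift (f x - w0) := by rw [hh0]; dsimp only; rw [hψu0]
    have hz : dist (f y - w0) 0 < 1/4 := by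
      rw [dist_zero_right, ← dist_eq_norm]
      have := claim2 uy huyD
      rw [hψuy] at this
      exact lt_of_le_of_lt this (by norm_num)
    have hz' : dist (f x - w0) 0 < 1/4 := by
      rw [dist_zero_right, ← dist_eq_norm]
      have := claim2 u0 hu0D
      rw [hψu0] at this
      exact lt_of_le_of_lt this (by norm_num)
    have hsub : h0 uy - h0 u0 = wlift (f y - f x) := by
      rw [hfy, hfx, ← wlift_sub _ _ hz hz', sub_sub_sub_cancel_right]
    have huyu0 : uy - u0 = w := by rw [huydef]; abel
    -- coordinate identification
    have hcoord : ∀ i : Fin d, (vlift (f y - f x) - A (vlift (y - x))) i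
        = (h1 uy - h1 u0 - A' (uy - u0)) i := by
      intro i
      have c1 : (vlift (f y - f x)) i = (h0 uy - h0 u0) i := by
        rw [hsub]; rfl
      have c2 : (A (vlift (y - x))) i = (A' w) i := by
        rw [hAco]
        congr 1
      have c3 : (h0 uy - h0 u0) i = (h1 uy - h1 u0) i := by
        simp only [Pi.sub_apply]
        rw [hEq huyD, hEq hu0D]
      show (vlift (f y - f x)) i - (A (vlift (y - x))) i
          = (h1 uy - h1 u0) i - (A' (uy - u0)) i
      rw [c1, c2, c3, huyu0]
    -- norms
    have hnum : ‖vlift (f y - f x) - A (vlift (y - x))‖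
        ≤ Real.sqrt d * ‖h1 uy - h1 u0 - A' (uy - u0)‖ :=
      norm_eucl_le_pi _ _ (fun i => (hcoord i).symm)
    have hden : ‖w‖ ≤ ‖vlift (y - x)‖ :=
      norm_pi_le_eucl (vlift (y - x)) w (fun i => rfl)
    calc ‖vlift (f y - f x) - A (vlift (y - x))‖ / ‖vlift (y - x)‖
        ≤ ‖vlift (f y - f x) - A (vlift (y - x))‖ / ‖w‖ := by
          apply div_le_div_of_nonneg_left (norm_nonneg _) hnwpos hden
      _ ≤ (Real.sqrt d * ‖h1 uy - h1 u0 - A' (uy - u0)‖) / ‖w‖ := by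
          apply div_le_div_of_nonneg_right hnum hnwpos.le
      _ = Real.sqrt d * (‖uy - u0‖⁻¹ * ‖h1 uy - h1 u0 - A' (uy - u0)‖) := by
          rw [huyu0]
          ring
  · have : Tendsto (fun y : Torus d => Real.sqrt d * ((fun u : Wd d => ‖u - u0‖⁻¹ *
        ‖h1 u - h1 u0 - A' (u - u0)‖) ((fun y : Torus d => u0 + wlift (y - x)) y)))
        (nhdsWithin x (F \ {x})) (nhds (Real.sqrt d * 0)) := hcomp.const_mul _
    rw [mul_zero] at this
    exact this

lemma vlift_zero : vlift (0 : Torus d) = 0 := congrArg (WithLp.toLp 2) (funext fun i => tlift_zero)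

lemma indicator_ratio {E : Set (Torus d)} (hE : MeasurableSet E) (z : Torus d) (r : ℝ) :
    (∫⁻ y in ball z r, E.indicator 1 y) = volume (E ∩ ball z r) := by
  rw [lintegral_indicator hE, Measure.restrict_restrict hE]
  simp

lemma norm_vlift_pos {z : Torus d} (hz : z ≠ 0) : 0 < ‖vlift z‖ := by
  have h1 : ‖wlift z‖ ≤ ‖vlift z‖ := norm_pi_le_eucl (vlift z) (wlift z) (fun i => rfl)
  have h2 : 0 < ‖wlift z‖ := by
    rw [norm_wlift_eq']
    exact norm_pos_iff.mpr hz
  linarith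

/-- a.e. point of a measurable set has density one. -/
lemma density_one_restrict {E : Set (Torus d)} (hE : MeasurableSet E) :
    ∀ᵐ x ∂(volume : Measure (Torus d)), x ∈ E → DensityOneAt E x := by
  have hfin : (∫⁻ y, E.indicator (1 : Torus d → ℝ≥0∞) y : ℝ≥0∞) ≠ ∞ := by
    rw [lintegral_indicator hE]
    simp only [Pi.one_apply, setLIntegral_one]
    exact measure_ne_top _ _
  have := torus_diff (E.indicator 1) (measurable_one.indicator hE) hfin
  filter_upwards [this] with x hx hxE
  unfold DensityOneAt
  have heq : ∀ r : ℝ, (∫⁻ y in ball x r, E.indicator 1 y) = volume (E ∩ ball x r) :=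
    fun r => indicator_ratio hE x r
  simp_rw [heq] at hx
  rw [Set.indicator_of_mem hxE] at hx
  exact hx

lemma density_zero_notmem {E : Set (Torus d)} (hE : MeasurableSet E) :
    ∀ᵐ z ∂(volume : Measure (Torus d)), z ∉ E →
      Tendsto (fun r : ℝ => volume (E ∩ ball z r) / volume (ball z r))
        (nhdsWithin 0 (Set.Ioi 0)) (nhds 0) := by
  have hfin : (∫⁻ y, E.indicator (1 : Torus d → ℝ≥0∞) y : ℝ≥0∞) ≠ ∞ := by
    rw [lintegral_indicator hE]
    simp only [Pi.one_apply, setLIntegral_one]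
    exact measure_ne_top _ _
  have := torus_diff (E.indicator 1) (measurable_one.indicator hE) hfin
  filter_upwards [this] with z hz hzE
  have heq : ∀ r : ℝ, (∫⁻ y in ball z r, E.indicator 1 y) = volume (E ∩ ball z r) :=
    fun r => indicator_ratio hE z r
  simp_rw [heq] at hz
  rw [Set.indicator_of_notMem hzE] at hz
  exact hz

lemma vol_ball_ne_zero (x : Torus d) {r : ℝ} (hr0 : 0 < r) (hr : r ≤ 1/2) :
    volume (ball x r) ≠ 0 := by
  rw [volume_ball_torus x hr, volume_ball_W 0 hr0]
  apply pow_ne_zero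
  simp only [ne_eq, ENNReal.ofReal_eq_zero, not_le]
  linarith

lemma vol_ball_ne_top (x : Torus d) : volume (ball x r) ≠ ∞ := measure_ne_top _ _

lemma density_iff_compl {E : Set (Torus d)} (hE : MeasurableSet E) (x : Torus d) :
    DensityOneAt E x ↔
      Tendsto (fun r : ℝ => volume (Eᶜ ∩ ball x r) / volume (ball x r))
        (nhdsWithin 0 (Set.Ioi 0)) (nhds 0) := by
  have hkey : ∀ r : ℝ, 0 < r → r ≤ 1/2 →
      (volume (Eᶜ ∩ ball x r) / volume (ball x r)
        = 1 - volume (E ∩ ball x r) / volume (ball x r)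
      ∧ volume (E ∩ ball x r) / volume (ball x r)
        = 1 - volume (Eᶜ ∩ ball x r) / volume (ball x r)) := by
    intro r hr0 hr
    have hne0 := vol_ball_ne_zero x hr0 hr
    have hnetop := vol_ball_ne_top (x := x) (r := r)
    have hadd : volume (E ∩ ball x r) / volume (ball x r)
        + volume (Eᶜ ∩ ball x r) / volume (ball x r) = 1 := by
      rw [ENNReal.div_add_div_same]
      have : volume (E ∩ ball x r) + volume (Eᶜ ∩ ball x r) = volume (ball x r) := by
        have h1 := measure_inter_add_diff (μ := (volume : Measure (Torus d)))
          (ball x r) hE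
        have h2 : ball x r \ E = Eᶜ ∩ ball x r := by
          rw [Set.diff_eq, Set.inter_comm]
        have h3 : ball x r ∩ E = E ∩ ball x r := Set.inter_comm _ _
        rw [h2, h3] at h1
        exact h1
      rw [this, ENNReal.div_self hne0 hnetop]
    have hEfin : volume (E ∩ ball x r) / volume (ball x r) ≠ ∞ := by
      apply ne_of_lt
      apply lt_of_le_of_lt (ENNReal.div_le_div_right (measure_mono Set.inter_subset_right) _)
      rw [ENNReal.div_self hne0 hnetop]
      exact ENNReal.one_lt_top
    have hCfin : volume (Eᶜ ∩ ball x r) / volume (ball x r) ≠ ∞ := by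
      apply ne_of_lt
      apply lt_of_le_of_lt (ENNReal.div_le_div_right (measure_mono Set.inter_subset_right) _)
      rw [ENNReal.div_self hne0 hnetop]
      exact ENNReal.one_lt_top
    constructor
    · exact ENNReal.eq_sub_of_add_eq hEfin (by rw [add_comm] at hadd; exact hadd)
    · exact ENNReal.eq_sub_of_add_eq hCfin hadd
  have hio : Set.Ioo (0:ℝ) (1/2) ∈ nhdsWithin (0:ℝ) (Set.Ioi 0) :=
    Ioo_mem_nhdsGT_of_mem ⟨le_refl 0, by norm_num⟩
  constructor
  · intro h
    have h2 : Tendsto (fun r : ℝ => 1 - volume (E ∩ ball x r) / volume (ball x r))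
        (nhdsWithin 0 (Set.Ioi 0)) (nhds (1 - 1)) :=
      ENNReal.Tendsto.sub tendsto_const_nhds h (Or.inl ENNReal.one_ne_top)
    rw [tsub_self] at h2
    apply h2.congr'
    filter_upwards [hio] with r hr
    exact ((hkey r hr.1 hr.2.le).1).symm
  · intro h
    have h2 : Tendsto (fun r : ℝ => 1 - volume (Eᶜ ∩ ball x r) / volume (ball x r))
        (nhdsWithin 0 (Set.Ioi 0)) (nhds (1 - 0)) :=
      ENNReal.Tendsto.sub tendsto_const_nhds h (Or.inl ENNReal.one_ne_top)
    rw [tsub_zero] at h2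
    apply h2.congr'
    filter_upwards [hio] with r hr
    exact ((hkey r hr.1 hr.2.le).2).symm

/-- Chain rule for the difference quotients, along a set `E` on which `S` lands in `FT`
and is Lipschitz towards `x`. -/
lemma comp_quotient_tendsto {d : ℕ} {T S : Torus d → Torus d} {x : Torus d}
    {A B : EuclideanSpace ℝ (Fin d) →L[ℝ] EuclideanSpace ℝ (Fin d)}
    {E FT : Set (Torus d)} (KS : ℝ) (hKS : 1 ≤ KS)
    (hE : ∀ y ∈ E, S y ∈ FT)
    (hlip : ∀ y ∈ E, dist (S y) (S x) ≤ KS * dist y x)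
    (hA : Tendsto (fun z => ‖vlift (T z - T (S x)) - A (vlift (z - S x))‖ / ‖vlift (z - S x)‖)
      (nhdsWithin (S x) (FT \ {S x})) (nhds 0))
    (hB : Tendsto (fun y => ‖vlift (S y - S x) - B (vlift (y - x))‖ / ‖vlift (y - x)‖)
      (nhdsWithin x (E \ {x})) (nhds 0)) :
    Tendsto (fun y => ‖vlift (T (S y) - T (S x)) - (A.comp B) (vlift (y - x))‖ / ‖vlift (y - x)‖)
      (nhdsWithin x (E \ {x})) (nhds 0) := by
  have hKS0 : 0 < KS := lt_of_lt_of_le one_pos hKS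
  set qT : Torus d → ℝ :=
    fun z => ‖vlift (T z - T (S x)) - A (vlift (z - S x))‖ / ‖vlift (z - S x)‖ with hqT
  have hqT0 : qT (S x) = 0 := by
    rw [hqT]
    simp [sub_self, vlift_zero]
  have hqTnn : ∀ z, 0 ≤ qT z := fun z => div_nonneg (norm_nonneg _) (norm_nonneg _)
  have hdisttend : Tendsto (fun y : Torus d => dist y x) (nhdsWithin x (E \ {x})) (nhds 0) := by
    have : Tendsto (fun y : Torus d => dist y x) (nhds x) (nhds (dist x x)) :=
      (continuous_id.dist continuous_const).tendsto x
    rw [dist_self] at this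
    exact this.mono_left nhdsWithin_le_nhds
  have hmapS : Tendsto S (nhdsWithin x (E \ {x})) (nhdsWithin (S x) (FT ∪ {S x})) := by
    rw [tendsto_nhdsWithin_iff]
    constructor
    · apply tendsto_iff_dist_tendsto_zero.mpr
      apply squeeze_zero' (Filter.Eventually.of_forall fun y => dist_nonneg)
      · filter_upwards [eventually_mem_nhdsWithin] with y hy
        exact hlip y hy.1
      · have := hdisttend.const_mul KS
        rwa [mul_zero] at this
    · filter_upwards [eventually_mem_nhdsWithin] with y hy
      exact Or.inl (hE y hy.1)
  have hsupfilter : nhdsWithin (S x) (FT ∪ {S x})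
      = nhdsWithin (S x) (FT \ {S x}) ⊔ pure (S x) := by
    have hset : FT ∪ {S x} = (FT \ {S x}) ∪ {S x} := by
      ext z
      simp only [Set.mem_union, Set.mem_diff, Set.mem_singleton_iff]
      constructor
      · rintro (hz | hz)
        · by_cases hzx : z = S x
          · exact Or.inr hzx
          · exact Or.inl ⟨hz, hzx⟩
        · exact Or.inr hz
      · rintro (⟨hz, _⟩ | hz)
        · exact Or.inl hz
        · exact Or.inr hz
    rw [hset, nhdsWithin_union, nhdsWithin_singleton]
  have hqTat : Tendsto qT (nhdsWithin (S x) (FT \ {S x}) ⊔ pure (S x)) (nhds 0) := by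
    rw [tendsto_sup]
    refine ⟨hA, ?_⟩
    rw [tendsto_pure_left]
    intro s hs
    rw [hqT0]
    exact mem_of_mem_nhds hs
  have hcompT : Tendsto (fun y => qT (S y)) (nhdsWithin x (E \ {x})) (nhds 0) := by
    apply hqTat.comp
    rwa [← hsupfilter]
  set qS : Torus d → ℝ :=
    fun y => ‖vlift (S y - S x) - B (vlift (y - x))‖ / ‖vlift (y - x)‖ with hqS
  apply squeeze_zero' (g := fun y => qT (S y) * (Real.sqrt d * KS) + ‖A‖ * qS y)
  · exact Filter.Eventually.of_forall fun y => div_nonneg (norm_nonneg _) (norm_nonneg _)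
  · filter_upwards [eventually_mem_nhdsWithin] with y hy
    have hyE : y ∈ E := hy.1
    have hyx : y ≠ x := hy.2
    have hvy : 0 < ‖vlift (y - x)‖ := norm_vlift_pos (sub_ne_zero.mpr hyx)
    set X : EuclideanSpace ℝ (Fin d) := vlift (T (S y) - T (S x)) - A (vlift (S y - S x)) with hX
    set Y : EuclideanSpace ℝ (Fin d) := vlift (S y - S x) - B (vlift (y - x)) with hY
    have hdecomp : vlift (T (S y) - T (S x)) - (A.comp B) (vlift (y - x)) = X + A Y := by
      rw [hX, hY, ContinuousLinearMap.comp_apply, map_sub]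
      abel
    have hbound : ‖vlift (T (S y) - T (S x)) - (A.comp B) (vlift (y - x))‖
        ≤ ‖X‖ + ‖A‖ * ‖Y‖ := by
      rw [hdecomp]
      exact le_trans (norm_add_le _ _) (by gcongr; exact A.le_opNorm Y)
    have hdiv : ‖vlift (T (S y) - T (S x)) - (A.comp B) (vlift (y - x))‖ / ‖vlift (y - x)‖
        ≤ ‖X‖ / ‖vlift (y - x)‖ + ‖A‖ * qS y := by
      calc ‖vlift (T (S y) - T (S x)) - (A.comp B) (vlift (y - x))‖ / ‖vlift (y - x)‖
          ≤ (‖X‖ + ‖A‖ * ‖Y‖) / ‖vlift (y - x)‖ :=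
            div_le_div_of_nonneg_right hbound hvy.le
        _ = ‖X‖ / ‖vlift (y - x)‖ + (‖A‖ * ‖Y‖) / ‖vlift (y - x)‖ := add_div _ _ _
        _ = ‖X‖ / ‖vlift (y - x)‖ + ‖A‖ * qS y := by
            rw [hqS]
            dsimp only
            rw [mul_div_assoc]
    have hXbound : ‖X‖ / ‖vlift (y - x)‖ ≤ qT (S y) * (Real.sqrt d * KS) := by
      by_cases hsy : S y = S x
      · have hX0 : X = 0 := by
          rw [hX, hsy]
          simp [sub_self, vlift_zero]
        rw [hX0, norm_zero, zero_div]
        apply mul_nonneg (hqTnn _)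
        positivity
      · have hw' : 0 < ‖vlift (S y - S x)‖ := norm_vlift_pos (sub_ne_zero.mpr hsy)
        have hqTval : qT (S y) = ‖X‖ / ‖vlift (S y - S x)‖ := rfl
        have hratio : ‖vlift (S y - S x)‖ / ‖vlift (y - x)‖ ≤ Real.sqrt d * KS := by
          rw [div_le_iff₀ hvy]
          have h1 : ‖vlift (S y - S x)‖ ≤ Real.sqrt d * ‖wlift (S y - S x)‖ :=
            norm_eucl_le_pi _ _ (fun i => rfl)
          have h2 : ‖wlift (S y - S x)‖ = dist (S y) (S x) := by
            rw [norm_wlift_eq', ← dist_eq_norm]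
          have h3 : dist (S y) (S x) ≤ KS * dist y x := hlip y hyE
          have h4 : dist y x ≤ ‖vlift (y - x)‖ := by
            have h5 : ‖wlift (y - x)‖ ≤ ‖vlift (y - x)‖ :=
              norm_pi_le_eucl (vlift (y - x)) (wlift (y - x)) (fun i => rfl)
            rw [norm_wlift_eq', ← dist_eq_norm] at h5
            exact h5
          calc ‖vlift (S y - S x)‖ ≤ Real.sqrt d * dist (S y) (S x) := by rw [← h2]; exact h1
            _ ≤ Real.sqrt d * (KS * dist y x) := by
                apply mul_le_mul_of_nonneg_left h3 (Real.sqrt_nonneg d)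
            _ ≤ Real.sqrt d * (KS * ‖vlift (y - x)‖) := by
                apply mul_le_mul_of_nonneg_left ?_ (Real.sqrt_nonneg d)
                exact mul_le_mul_of_nonneg_left h4 hKS0.le
            _ = Real.sqrt d * KS * ‖vlift (y - x)‖ := by ring
        have heq : ‖X‖ / ‖vlift (y - x)‖
            = qT (S y) * (‖vlift (S y - S x)‖ / ‖vlift (y - x)‖) := by
          rw [hqTval]
          field_simp
        rw [heq]
        exact mul_le_mul_of_nonneg_left hratio (hqTnn _)
    calc ‖vlift (T (S y) - T (S x)) - (A.comp B) (vlift (y - x))‖ / ‖vlift (y - x)‖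
        ≤ ‖X‖ / ‖vlift (y - x)‖ + ‖A‖ * qS y := hdiv
      _ ≤ qT (S y) * (Real.sqrt d * KS) + ‖A‖ * qS y := by
          exact add_le_add hXbound le_rfl
  · have h1 := hcompT.mul_const (Real.sqrt d * KS)
    have h2 := hB.const_mul ‖A‖
    have h3 := h1.add h2
    rw [zero_mul, mul_zero, add_zero] at h3
    exact h3

lemma density_inter_preimage {d : ℕ} (μ : Measure (Torus d)) [IsProbabilityMeasure μ]
    (hac : μ ≪ volume)
    {S : Torus d → Torus d} (hSmp : MeasurePreserving S μ μ)
    {FS FT : Set (Torus d)} (hFSm : MeasurableSet FS) (hFTm : MeasurableSet FT)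
    {x : Torus d} (hxFS : x ∈ FS)
    (KS : ℝ) (hKS : 1 ≤ KS)
    (hlip : ∀ y ∈ FS, dist (S y) (S x) ≤ KS * dist y x)
    (hdensS : DensityOneAt FS x)
    {q : ℚ} (hq : 0 < q)
    (hLq : Tendsto (fun r : ℝ =>
        volume ({y | μ.rnDeriv volume y < ENNReal.ofReal q} ∩ ball x r) / volume (ball x r))
      (nhdsWithin 0 (Set.Ioi 0)) (nhds 0))
    (hν : Tendsto (fun s : ℝ => μ (FTᶜ ∩ ball (S x) s) / volume (ball (S x) s))
      (nhdsWithin 0 (Set.Ioi 0)) (nhds 0)) :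
    DensityOneAt (FS ∩ S ⁻¹' FT) x := by
  have hSm : Measurable S := hSmp.measurable
  have hKS0 : 0 < KS := lt_of_lt_of_le one_pos hKS
  set ρ : Torus d → ℝ≥0∞ := μ.rnDeriv volume with hρ
  have hρm : Measurable ρ := Measure.measurable_rnDeriv μ volume
  have hμρ : volume.withDensity ρ = μ := Measure.withDensity_rnDeriv_eq μ volume hac
  set cq : ℝ≥0∞ := ENNReal.ofReal q with hcq
  have hcq0 : cq ≠ 0 := by
    rw [hcq]
    simp only [ne_eq, ENNReal.ofReal_eq_zero, not_le]
    exact_mod_cast hq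
  have hcqtop : cq ≠ ∞ := ENNReal.ofReal_ne_top
  set E : Set (Torus d) := FS ∩ S ⁻¹' FT with hE
  have hEm : MeasurableSet E := hFSm.inter (hFTm.preimage hSm)
  rw [density_iff_compl hEm]
  set t1 : ℝ → ℝ≥0∞ := fun r => volume (FSᶜ ∩ ball x r) / volume (ball x r) with ht1
  set t2 : ℝ → ℝ≥0∞ :=
    fun r => volume ({y | ρ y < cq} ∩ ball x r) / volume (ball x r) with ht2
  set t3 : ℝ → ℝ≥0∞ :=
    fun r => cq⁻¹ * (μ (FTᶜ ∩ ball (S x) (KS*r)) / volume (ball x r)) with ht3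
  have h1 : Tendsto t1 (nhdsWithin 0 (Set.Ioi 0)) (nhds 0) :=
    (density_iff_compl hFSm x).mp hdensS
  have h2 : Tendsto t2 (nhdsWithin 0 (Set.Ioi 0)) (nhds 0) := hLq
  set rmax : ℝ := min (1/2) (1/(2*KS)) with hrmax
  have hrmax0 : 0 < rmax := by
    rw [hrmax]
    apply lt_min (by norm_num)
    positivity
  have hio : Set.Ioo (0:ℝ) rmax ∈ nhdsWithin (0:ℝ) (Set.Ioi 0) :=
    Ioo_mem_nhdsGT_of_mem ⟨le_refl 0, hrmax0⟩
  have h3 : Tendsto t3 (nhdsWithin 0 (Set.Ioi 0)) (nhds 0) := by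
    have hKr : Tendsto (fun r : ℝ => KS * r) (nhdsWithin 0 (Set.Ioi 0))
        (nhdsWithin 0 (Set.Ioi 0)) := by
      apply tendsto_nhdsWithin_of_tendsto_nhds_of_eventually_within
      · have : Tendsto (fun r : ℝ => KS * r) (nhds 0) (nhds (KS * 0)) :=
          (continuous_const.mul continuous_id).tendsto 0
        rw [mul_zero] at this
        exact this.mono_left nhdsWithin_le_nhds
      · filter_upwards [self_mem_nhdsWithin] with r hr
        exact mul_pos hKS0 hr
    have hcomp := hν.comp hKr
    have hfin : Tendsto (fun r : ℝ => cq⁻¹ * ((μ (FTᶜ ∩ ball (S x) (KS*r))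
        / volume (ball (S x) (KS*r))) * ENNReal.ofReal KS ^ d))
        (nhdsWithin 0 (Set.Ioi 0)) (nhds 0) := by
      have hstep := ENNReal.Tendsto.mul_const hcomp
        (b := ENNReal.ofReal KS ^ d) (Or.inr (ENNReal.pow_ne_top ENNReal.ofReal_ne_top))
      rw [zero_mul] at hstep
      have := ENNReal.Tendsto.const_mul hstep (a := cq⁻¹) (Or.inr (by
        simp only [ne_eq, ENNReal.inv_eq_top]
        exact hcq0))
      rwa [mul_zero] at this
    apply hfin.congr'
    filter_upwards [hio] with r hr
    have hr0 : 0 < r := hr.1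
    have hrhalf : r ≤ 1/2 := le_of_lt (lt_of_lt_of_le hr.2 (min_le_left _ _))
    have hKrhalf : KS * r ≤ 1/2 := by
      have h4 : r < 1/(2*KS) := lt_of_lt_of_le hr.2 (min_le_right _ _)
      rw [lt_div_iff₀ (by positivity)] at h4
      linarith
    have hKr0 : 0 < KS * r := mul_pos hKS0 hr0
    have hvb : volume (ball x r) = ENNReal.ofReal (2*r) ^ d := by
      rw [volume_ball_torus x hrhalf, volume_ball_W 0 hr0]
    have hvbS : volume (ball (S x) (KS*r)) = ENNReal.ofReal KS ^ d * ENNReal.ofReal (2*r) ^ d := by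
      rw [volume_ball_torus (S x) hKrhalf, volume_ball_W 0 hKr0]
      rw [← mul_pow, ← ENNReal.ofReal_mul hKS0.le]
      ring_nf
    have hb0 : (ENNReal.ofReal KS ^ d : ℝ≥0∞) ≠ 0 := by
      apply pow_ne_zero
      simp only [ne_eq, ENNReal.ofReal_eq_zero, not_le]
      linarith
    have hbtop : (ENNReal.ofReal KS ^ d : ℝ≥0∞) ≠ ∞ := ENNReal.pow_ne_top ENNReal.ofReal_ne_top
    rw [ht3]
    dsimp only
    congr 1
    rw [hvb, hvbS]
    set a := μ (FTᶜ ∩ ball (S x) (KS*r))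
    set b := (ENNReal.ofReal KS ^ d : ℝ≥0∞)
    set c := (ENNReal.ofReal (2*r) ^ d : ℝ≥0∞)
    rw [div_eq_mul_inv, div_eq_mul_inv, ENNReal.mul_inv (Or.inl hb0) (Or.inl hbtop)]
    calc a * (b⁻¹ * c⁻¹) * b = a * c⁻¹ * (b⁻¹ * b) := by ring
      _ = a * c⁻¹ * 1 := by rw [ENNReal.inv_mul_cancel hb0 hbtop]
      _ = a * c⁻¹ := by rw [mul_one]
  -- squeeze
  have hupper : ∀ᶠ r in nhdsWithin (0:ℝ) (Set.Ioi 0),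
      volume (Eᶜ ∩ ball x r) / volume (ball x r) ≤ t1 r + t2 r + t3 r := by
    filter_upwards [hio] with r hr
    have hr0 : 0 < r := hr.1
    set Bad : Set (Torus d) := ball x r ∩ FS ∩ S ⁻¹' FTᶜ ∩ {y | cq ≤ ρ y} with hBad
    have hBadm : MeasurableSet Bad :=
      ((measurableSet_ball.inter hFSm).inter (hFTm.compl.preimage hSm)).inter
        (measurableSet_le measurable_const hρm)
    have hsplit : Eᶜ ∩ ball x r ⊆ (FSᶜ ∩ ball x r) ∪ ({y | ρ y < cq} ∩ ball x r) ∪ Bad := by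
      intro y hy
      obtain ⟨hyE, hyB⟩ := hy
      rw [hE] at hyE
      by_cases hyFS : y ∈ FS
      · have hyFT : S y ∉ FT := by
          intro hc
          exact hyE ⟨hyFS, hc⟩
        by_cases hyρ : ρ y < cq
        · exact Or.inl (Or.inr ⟨hyρ, hyB⟩)
        · push_neg at hyρ
          exact Or.inr ⟨⟨⟨hyB, hyFS⟩, hyFT⟩, hyρ⟩
      · exact Or.inl (Or.inl ⟨hyFS, hyB⟩)
    have hm3 : volume Bad ≤ cq⁻¹ * μ (FTᶜ ∩ ball (S x) (KS*r)) := by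
      have hcheb : cq * volume Bad ≤ μ Bad := by
        have hμBad : μ Bad = ∫⁻ y in Bad, ρ y ∂volume := by
          rw [← hμρ, withDensity_apply _ hBadm]
        rw [hμBad]
        calc cq * volume Bad = ∫⁻ _y in Bad, cq ∂volume := (setLIntegral_const Bad cq).symm
          _ ≤ ∫⁻ y in Bad, ρ y ∂volume := setLIntegral_mono hρm (fun y hy => hy.2)
      have hBadsub : Bad ⊆ S ⁻¹' (FTᶜ ∩ ball (S x) (KS*r)) := by
        intro y hy
        refine ⟨hy.1.2, ?_⟩
        rw [mem_ball]
        calc dist (S y) (S x) ≤ KS * dist y x := hlip y hy.1.1.2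
          _ < KS * r := by
              apply mul_lt_mul_of_pos_left ?_ hKS0
              exact mem_ball.mp hy.1.1.1
      have hμpre : μ (S ⁻¹' (FTᶜ ∩ ball (S x) (KS*r))) = μ (FTᶜ ∩ ball (S x) (KS*r)) :=
        hSmp.measure_preimage ((hFTm.compl.inter measurableSet_ball).nullMeasurableSet)
      calc volume Bad = cq⁻¹ * (cq * volume Bad) := by
            rw [← mul_assoc, ENNReal.inv_mul_cancel hcq0 hcqtop, one_mul]
        _ ≤ cq⁻¹ * μ Bad := by
            apply mul_le_mul_right hcheb
        _ ≤ cq⁻¹ * μ (FTᶜ ∩ ball (S x) (KS*r)) := by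
            apply mul_le_mul_right
            rw [← hμpre]
            exact measure_mono hBadsub
    calc volume (Eᶜ ∩ ball x r) / volume (ball x r)
        ≤ (volume (FSᶜ ∩ ball x r) + volume ({y | ρ y < cq} ∩ ball x r) + volume Bad)
            / volume (ball x r) := by
          apply ENNReal.div_le_div_right
          calc volume (Eᶜ ∩ ball x r)
              ≤ volume ((FSᶜ ∩ ball x r) ∪ ({y | ρ y < cq} ∩ ball x r) ∪ Bad) :=
                measure_mono hsplit
            _ ≤ volume ((FSᶜ ∩ ball x r) ∪ ({y | ρ y < cq} ∩ ball x r)) + volume Bad :=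
                measure_union_le _ _
            _ ≤ volume (FSᶜ ∩ ball x r) + volume ({y | ρ y < cq} ∩ ball x r) + volume Bad := by
                refine add_le_add ?_ le_rfl
                exact measure_union_le _ _
      _ = volume (FSᶜ ∩ ball x r) / volume (ball x r)
          + volume ({y | ρ y < cq} ∩ ball x r) / volume (ball x r)
          + volume Bad / volume (ball x r) := by
          rw [← ENNReal.div_add_div_same, ← ENNReal.div_add_div_same]
      _ ≤ t1 r + t2 r + t3 r := by
          apply add_le_add (le_refl _)
          rw [ht3]
          dsimp only
          calc volume Bad / volume (ball x r)
              ≤ (cq⁻¹ * μ (FTᶜ ∩ ball (S x) (KS*r))) / volume (ball x r) :=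
                ENNReal.div_le_div_right hm3 _
            _ = cq⁻¹ * (μ (FTᶜ ∩ ball (S x) (KS*r)) / volume (ball x r)) := by
                rw [div_eq_mul_inv, div_eq_mul_inv, mul_assoc]
  have hsum : Tendsto (fun r => t1 r + t2 r + t3 r) (nhdsWithin 0 (Set.Ioi 0)) (nhds 0) := by
    have := (h1.add h2).add h3
    simpa using this
  apply tendsto_of_tendsto_of_tendsto_of_le_of_le' tendsto_const_nhds hsum
  · exact Filter.Eventually.of_forall fun r => bot_le
  · exact hupper

end ACR

open ACR Metric

/-- chain rule for approximate differentials of two measure-preserving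
Lusin–Lipschitz maps of the torus with common invariant measure `μ ≪ ℒ^d`. -/
theorem approx_chain_rule (d : ℕ) (p : ℝ≥0∞) (hp : 1 ≤ p)
    (μ : Measure (Torus d)) [IsProbabilityMeasure μ] (hac : μ ≪ volume)
    (T S : Torus d → Torus d)
    (hT : MeasurePreserving T μ μ) (hS : MeasurePreserving S μ μ)
    (gT gS : Torus d → ℝ) (hgT : MemLp gT p μ) (hgS : MemLp gS p μ)
    (hLipT : ∀ x y, dist (T x) (T y) ≤ Real.exp (gT x + gT y) * dist x y)
    (hLipS : ∀ x y, dist (S x) (S y) ≤ Real.exp (gS x + gS y) * dist x y) :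
    ∀ᵐ x ∂μ, ∃ A B : EuclideanSpace ℝ (Fin d) →L[ℝ] EuclideanSpace ℝ (Fin d),
      ApproxDerivAt T (S x) A ∧ ApproxDerivAt S x B ∧
      ApproxDerivAt (T ∘ S) x (A.comp B) := by
  classical
  -- Radon–Nikodym setup
  set ρ : Torus d → ℝ≥0∞ := μ.rnDeriv volume with hρ
  have hρm : Measurable ρ := Measure.measurable_rnDeriv μ volume
  have hμρ : volume.withDensity ρ = μ := Measure.withDensity_rnDeriv_eq μ volume hac
  -- measurable modifications of gS, gT
  have hgSa := hgS.1
  have hgTa := hgT.1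
  set gS' : Torus d → ℝ := hgSa.mk gS with hgS'def
  set gT' : Torus d → ℝ := hgTa.mk gT with hgT'def
  have hgS'm : Measurable gS' := hgSa.stronglyMeasurable_mk.measurable
  have hgT'm : Measurable gT' := hgTa.stronglyMeasurable_mk.measurable
  have hgSeq : gS =ᵐ[μ] gS' := hgSa.ae_eq_mk
  have hgTeq : gT =ᵐ[μ] gT' := hgTa.ae_eq_mk
  set Z0 : Set (Torus d) := {x | gS x ≠ gS' x} ∪ {x | gT x ≠ gT' x} with hZ0def
  have hZ0 : μ Z0 = 0 := by
    apply measure_union_null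
    · exact ae_iff.mp hgSeq
    · exact ae_iff.mp hgTeq
  set Z : Set (Torus d) := toMeasurable μ Z0 with hZdef
  have hZm : MeasurableSet Z := measurableSet_toMeasurable μ Z0
  have hZ : μ Z = 0 := by rw [hZdef, measure_toMeasurable]; exact hZ0
  have hnotZ : ∀ y, y ∉ Z → gS y = gS' y ∧ gT y = gT' y := by
    intro y hy
    have h2 : y ∉ Z0 := fun hc => hy (subset_toMeasurable μ Z0 hc)
    simp only [hZ0def, Set.mem_union, Set.mem_setOf_eq, not_or, not_not] at h2
    exact h2
  set FS : ℕ → Set (Torus d) := fun N => {y | gS' y ≤ N} \ Z with hFSdef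
  set FT : ℕ → Set (Torus d) := fun M => {y | gT' y ≤ M} \ Z with hFTdef
  have hFSm : ∀ N, MeasurableSet (FS N) :=
    fun N => (measurableSet_le hgS'm measurable_const).diff hZm
  have hFTm : ∀ M, MeasurableSet (FT M) :=
    fun M => (measurableSet_le hgT'm measurable_const).diff hZm
  have hFSlip : ∀ N : ℕ, ∀ a ∈ FS N, ∀ b ∈ FS N,
      dist (S a) (S b) ≤ Real.exp (2*N) * dist a b := by
    intro N a ha b hb
    have h1 := hLipS a b
    have hga : gS a ≤ N := by
      rw [(hnotZ a ha.2).1]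
      exact ha.1
    have hgb : gS b ≤ N := by
      rw [(hnotZ b hb.2).1]
      exact hb.1
    calc dist (S a) (S b) ≤ Real.exp (gS a + gS b) * dist a b := h1
      _ ≤ Real.exp (2*N) * dist a b := by
          apply mul_le_mul_of_nonneg_right _ dist_nonneg
          apply Real.exp_le_exp.mpr
          push_cast
          linarith
  have hFTlip : ∀ M : ℕ, ∀ a ∈ FT M, ∀ b ∈ FT M,
      dist (T a) (T b) ≤ Real.exp (2*M) * dist a b := by
    intro M a ha b hb
    have h1 := hLipT a b
    have hga : gT a ≤ M := by
      rw [(hnotZ a ha.2).2]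
      exact ha.1
    have hgb : gT b ≤ M := by
      rw [(hnotZ b hb.2).2]
      exact hb.1
    calc dist (T a) (T b) ≤ Real.exp (gT a + gT b) * dist a b := h1
      _ ≤ Real.exp (2*M) * dist a b := by
          apply mul_le_mul_of_nonneg_right _ dist_nonneg
          apply Real.exp_le_exp.mpr
          push_cast
          linarith
  have hexp1 : ∀ N : ℕ, (1:ℝ) ≤ Real.exp (2*N) := fun N => Real.one_le_exp (by positivity)
  -- core conclusions, μ-a.e.
  have hcoreS : ∀ N : ℕ, ∀ᵐ x ∂μ, x ∈ FS N → (DensityOneAt (FS N) x ∧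
      ∃ B : EuclideanSpace ℝ (Fin d) →L[ℝ] EuclideanSpace ℝ (Fin d),
        Tendsto (fun y => ‖vlift (S y - S x) - B (vlift (y - x))‖ / ‖vlift (y - x)‖)
          (nhdsWithin x (FS N \ {x})) (nhds 0)) := by
    intro N
    have hc := core S (FS N) (hFSm N) (Real.exp (2*N)) (hexp1 N) (hFSlip N)
    rw [ae_restrict_iff' (hFSm N)] at hc
    have hd := density_one_restrict (hFSm N)
    refine Filter.Eventually.filter_mono hac.ae_le ?_
    filter_upwards [hc, hd] with x h1 h2 hx
    exact ⟨h2 hx, h1 hx⟩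
  have hcoreT : ∀ M : ℕ, ∀ᵐ z ∂μ, z ∈ FT M → (DensityOneAt (FT M) z ∧
      ∃ A : EuclideanSpace ℝ (Fin d) →L[ℝ] EuclideanSpace ℝ (Fin d),
        Tendsto (fun y => ‖vlift (T y - T z) - A (vlift (y - z))‖ / ‖vlift (y - z)‖)
          (nhdsWithin z (FT M \ {z})) (nhds 0)) := by
    intro M
    have hc := core T (FT M) (hFTm M) (Real.exp (2*M)) (hexp1 M) (hFTlip M)
    rw [ae_restrict_iff' (hFTm M)] at hc
    have hd := density_one_restrict (hFTm M)
    refine Filter.Eventually.filter_mono hac.ae_le ?_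
    filter_upwards [hc, hd] with z h1 h2 hz
    exact ⟨h2 hz, h1 hz⟩
  -- the ν-density fact at points of FT M
  have hνfact : ∀ M : ℕ, ∀ᵐ z ∂μ, z ∈ FT M →
      Tendsto (fun s : ℝ => μ ((FT M)ᶜ ∩ ball z s) / volume (ball z s))
        (nhdsWithin 0 (Set.Ioi 0)) (nhds 0) := by
    intro M
    have hint : (∫⁻ y, ((FT M)ᶜ.indicator ρ) y : ℝ≥0∞) ≠ ∞ := by
      apply ne_of_lt
      apply lt_of_le_of_lt (lintegral_mono (Set.indicator_le_self _ _))
      rw [Measure.lintegral_rnDeriv hac]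
      exact measure_lt_top μ _
    have htd := torus_diff ((FT M)ᶜ.indicator ρ) (hρm.indicator (hFTm M).compl) hint
    refine Filter.Eventually.filter_mono hac.ae_le ?_
    filter_upwards [htd] with z hz hzFT
    have hval : ((FT M)ᶜ.indicator ρ) z = 0 := Set.indicator_of_notMem (Set.notMem_compl_iff.mpr hzFT) ρ
    rw [hval] at hz
    apply hz.congr
    intro s
    congr 1
    rw [lintegral_indicator (hFTm M).compl, Measure.restrict_restrict (hFTm M).compl,
      ← withDensity_apply ρ ((hFTm M).compl.inter measurableSet_ball), hμρ]
  -- positivity of density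
  have hρpos : ∀ᵐ x ∂μ, 0 < ρ x := by
    have hμ0 : μ {x | ρ x = 0} = 0 := by
      have hm : MeasurableSet {x | ρ x = 0} := hρm (measurableSet_singleton 0)
      rw [← hμρ, withDensity_apply _ hm]
      rw [setLIntegral_congr_fun hm (fun y hy => hy)]
      simp
    rw [ae_iff]
    convert hμ0 using 2
    ext x
    simp [pos_iff_ne_zero]
  -- Lebesgue points of {ρ < q}
  have hLq : ∀ᵐ x ∂μ, ∀ q : ℚ, ENNReal.ofReal q ≤ ρ x →
      Tendsto (fun r : ℝ =>
        volume ({y | ρ y < ENNReal.ofReal q} ∩ ball x r) / volume (ball x r))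
        (nhdsWithin 0 (Set.Ioi 0)) (nhds 0) := by
    rw [ae_all_iff]
    intro q
    have hm : MeasurableSet {y | ρ y < ENNReal.ofReal q} :=
      measurableSet_lt hρm measurable_const
    have := density_zero_notmem hm
    refine Filter.Eventually.filter_mono hac.ae_le ?_
    filter_upwards [this] with x hx hq
    apply hx
    simp only [Set.mem_setOf_eq, not_lt]
    exact hq
  -- covering facts
  have hZae : ∀ᵐ x ∂μ, x ∉ Z := measure_eq_zero_iff_ae_notMem.mp hZ
  have hcovS : ∀ᵐ x ∂μ, ∃ N : ℕ, x ∈ FS N := by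
    filter_upwards [hZae] with x hx
    exact ⟨⌈gS' x⌉₊, ⟨by simp only [Set.mem_setOf_eq]; exact Nat.le_ceil _, hx⟩⟩
  have hcovT : ∀ᵐ z ∂μ, ∃ M : ℕ, z ∈ FT M := by
    filter_upwards [hZae] with z hz
    exact ⟨⌈gT' z⌉₊, ⟨by simp only [Set.mem_setOf_eq]; exact Nat.le_ceil _, hz⟩⟩
  -- T-side facts pulled back through S
  have hTside : ∀ᵐ z ∂μ, (∀ M : ℕ, z ∈ FT M → ((DensityOneAt (FT M) z ∧
      ∃ A : EuclideanSpace ℝ (Fin d) →L[ℝ] EuclideanSpace ℝ (Fin d),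
        Tendsto (fun y => ‖vlift (T y - T z) - A (vlift (y - z))‖ / ‖vlift (y - z)‖)
          (nhdsWithin z (FT M \ {z})) (nhds 0)) ∧
      Tendsto (fun s : ℝ => μ ((FT M)ᶜ ∩ ball z s) / volume (ball z s))
        (nhdsWithin 0 (Set.Ioi 0)) (nhds 0))) ∧ (∃ M : ℕ, z ∈ FT M) := by
    have h1 : ∀ᵐ z ∂μ, ∀ M : ℕ, z ∈ FT M → (DensityOneAt (FT M) z ∧
        ∃ A : EuclideanSpace ℝ (Fin d) →L[ℝ] EuclideanSpace ℝ (Fin d),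
          Tendsto (fun y => ‖vlift (T y - T z) - A (vlift (y - z))‖ / ‖vlift (y - z)‖)
            (nhdsWithin z (FT M \ {z})) (nhds 0)) := ae_all_iff.mpr hcoreT
    have h2 : ∀ᵐ z ∂μ, ∀ M : ℕ, z ∈ FT M →
        Tendsto (fun s : ℝ => μ ((FT M)ᶜ ∩ ball z s) / volume (ball z s))
          (nhdsWithin 0 (Set.Ioi 0)) (nhds 0) := ae_all_iff.mpr hνfact
    filter_upwards [h1, h2, hcovT] with z hz1 hz2 hz3
    exact ⟨fun M hM => ⟨hz1 M hM, hz2 M hM⟩, hz3⟩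
  have hTS := hS.quasiMeasurePreserving.ae hTside
  -- final assembly
  filter_upwards [ae_all_iff.mpr hcoreS, hcovS, hTS, hρpos, hLq]
    with x hSx hScov hTx hρx hLqx
  obtain ⟨N, hxFS⟩ := hScov
  obtain ⟨hdensS, B, hBt⟩ := hSx N hxFS
  obtain ⟨M, hSxFT⟩ := hTx.2
  obtain ⟨⟨hdensT, A, hAt⟩, hνt⟩ := hTx.1 M hSxFT
  obtain ⟨q, hq0, hqle⟩ : ∃ q : ℚ, 0 < q ∧ ENNReal.ofReal q ≤ ρ x := by
    rcases le_or_gt 1 (ρ x) with h | h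
    · exact ⟨1, one_pos, by simpa using h⟩
    · have hne : ρ x ≠ ∞ := ne_of_lt (lt_of_lt_of_le h le_top)
      have htr : 0 < (ρ x).toReal := ENNReal.toReal_pos (ne_of_gt hρx) hne
      obtain ⟨q, hq1, hq2⟩ := exists_rat_btwn htr
      refine ⟨q, by exact_mod_cast hq1, ?_⟩
      rw [← ENNReal.ofReal_toReal hne]
      exact ENNReal.ofReal_le_ofReal hq2.le
  set KS : ℝ := Real.exp (2*N) with hKSdef
  have hKS1 : (1:ℝ) ≤ KS := hexp1 N
  have hlipx : ∀ y ∈ FS N, dist (S y) (S x) ≤ KS * dist y x :=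
    fun y hy => hFSlip N y hy x hxFS
  refine ⟨A, B, ⟨FT M, hFTm M, hdensT, hAt⟩, ⟨FS N, hFSm N, hdensS, hBt⟩, ?_⟩
  refine ⟨FS N ∩ S ⁻¹' (FT M), (hFSm N).inter ((hFTm M).preimage hS.measurable), ?_, ?_⟩
  · exact density_inter_preimage μ hac hS (hFSm N) (hFTm M) hxFS KS hKS1 hlipx hdensS
      hq0 (hLqx q hqle) hνt
  · have := comp_quotient_tendsto (T := T) (S := S) (x := x) (A := A) (B := B)
      (E := FS N ∩ S ⁻¹' (FT M)) (FT := FT M) KS hKS1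
      (fun y hy => hy.2)
      (fun y hy => hlipx y hy.1)
      hAt
      (hBt.mono_left (nhdsWithin_mono x
        (Set.diff_subset_diff_left Set.inter_subset_left)))
    exact this
end
end

section
/- Let f ∈ L¹∩L^∞(𝕋^d) with ‖f‖_{L^∞} ≤ 1 and g ∈ L¹(𝕋^d) satisfy |f(x)−f(y)| ≤ e^{g(x)+g(y)} d(x,y) for all x,y ∈ 𝕋^d. Then ‖f‖²_{Ḣ_log} ≤ C(d)(‖g‖_{L¹(𝕋^d)} + ‖f‖_{L¹(𝕋^d)}), where ‖f‖²_{Ḣ_log} = ∫_{𝕋^d} ∫_{B_{1/5}(0)} |f(x+h)−f(x)|²/|h|^d dh dx. -/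
open MeasureTheory Filter
open scoped ENNReal

set_option maxHeartbeats 1000000

noncomputable section

/-- The squared homogeneous log-Sobolev seminorm
`‖f‖²_{Ḣ_log} = ∫_{𝕋^d} ∫_{B_{1/5}(0)} |f(x+h) - f(x)|²/|h|^d dh dx`. -/
def HlogSq {d : ℕ} (f : Torus d → ℝ) : ℝ≥0∞ :=
  ∫⁻ x, ∫⁻ h in Metric.ball (0 : Torus d) (1 / 5),
    ENNReal.ofReal (|f (x + h) - f x| ^ 2 / ‖h‖ ^ d)

namespace HB

open Set

/-! ### Dyadic radii and annuli -/

/-- dyadic radii -/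
def sR (j : ℕ) : ℝ := (1/5) * (1/2)^j

lemma sR_pos (j : ℕ) : 0 < sR j := by unfold sR; positivity

lemma sR_le (j : ℕ) : sR j ≤ 1/5 := by
  have h1 : (1/2:ℝ)^j ≤ 1 := pow_le_one₀ (by norm_num) (by norm_num)
  have : (0:ℝ) < 1/5 := by norm_num
  unfold sR; nlinarith

/-- dyadic annuli in the torus -/
def Ann (d : ℕ) (j : ℕ) : Set (Torus d) := {h | sR (j+1) < ‖h‖ ∧ ‖h‖ ≤ sR j}

lemma measurable_norm_torus (d : ℕ) : Measurable (fun h : Torus d => ‖h‖) :=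
  continuous_norm.measurable

lemma Ann_measurable (d j : ℕ) : MeasurableSet (Ann d j) := by
  have : Ann d j = (fun h : Torus d => ‖h‖) ⁻¹' (Set.Ioc (sR (j+1)) (sR j)) := rfl
  rw [this]
  exact measurable_norm_torus d measurableSet_Ioc

lemma exists_ann {d : ℕ} (h : Torus d) (h0 : h ≠ 0) (hb : ‖h‖ < 1/5) : ∃ j, h ∈ Ann d j := by
  classical
  have ht : 0 < ‖h‖ := norm_pos_iff.mpr h0
  have hex : ∃ n : ℕ, sR (n+1) < ‖h‖ := by
    obtain ⟨n, hn⟩ := exists_pow_lt_of_lt_one (mul_pos (by norm_num : (0:ℝ) < 5) ht)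
      (by norm_num : (1/2:ℝ) < 1)
    refine ⟨n, ?_⟩
    have : (1/2:ℝ)^(n+1) ≤ (1/2)^n := by
      apply pow_le_pow_of_le_one (by norm_num) (by norm_num) (Nat.le_succ n)
    unfold sR; nlinarith
  set j := Nat.find hex with hj
  refine ⟨j, Nat.find_spec hex, ?_⟩
  rcases Nat.eq_zero_or_pos j with h0' | hpos
  · rw [h0']; unfold sR; simpa using hb.le
  · obtain ⟨k, hk⟩ := Nat.exists_eq_succ_of_ne_zero hpos.ne'
    have hnk : ¬ sR (k+1) < ‖h‖ := Nat.find_min hex (by omega)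
    push_neg at hnk
    simpa [hk] using hnk

lemma vol_ball_le {d : ℕ} (r : ℝ) (hr : 0 ≤ r) :
    volume (Metric.closedBall (0 : Torus d) r) ≤ ENNReal.ofReal ((2*r)^d) := by
  rw [closedBall_pi _ hr, volume_pi_pi]
  calc ∏ i : Fin d, volume (Metric.closedBall ((0:Torus d) i) r)
      ≤ ∏ _i : Fin d, ENNReal.ofReal (2*r) := by
        apply Finset.prod_le_prod'
        intro i _
        rw [AddCircle.volume_closedBall (T := 1) r]
        exact ENNReal.ofReal_le_ofReal (min_le_right _ _)
    _ = ENNReal.ofReal ((2*r)^d) := by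
        rw [Finset.prod_const, ENNReal.ofReal_pow (by positivity)]
        simp

lemma vol_ann_le {d : ℕ} (j : ℕ) :
    volume (Ann d j) ≤ ENNReal.ofReal ((2 * sR j)^d) := by
  refine le_trans (measure_mono ?_) (vol_ball_le (sR j) (sR_pos j).le)
  intro h hh
  rw [Metric.mem_closedBall, dist_zero_right]
  exact hh.2

/-! ### Counting and geometric series lemmas -/

lemma tsum_indicator_le (t : ℝ) :
    (∑' j : ℕ, if ((j:ℝ)+1) ≤ t then (1:ℝ≥0∞) else 0) ≤ ENNReal.ofReal t := by
  classical
  have hv : ∀ j ∉ Finset.range (Nat.floor t), (if ((j:ℝ)+1) ≤ t then (1:ℝ≥0∞) else 0) = 0 := by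
    intro j hj
    rw [if_neg]
    intro hle
    have h1 : t < (Nat.floor t : ℝ) + 1 := Nat.lt_floor_add_one t
    have h2 : (Nat.floor t : ℝ) ≤ (j:ℝ) := by
      exact_mod_cast Nat.le_of_not_lt (fun hc => hj (Finset.mem_range.mpr hc))
    linarith
  rw [tsum_eq_sum hv]
  calc ∑ j ∈ Finset.range (Nat.floor t), (if ((j:ℝ)+1) ≤ t then (1:ℝ≥0∞) else 0)
      ≤ ∑ _j ∈ Finset.range (Nat.floor t), 1 := by
        apply Finset.sum_le_sum; intro i _; split_ifs <;> simp
    _ = (Nat.floor t : ℝ≥0∞) := by simp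
    _ ≤ ENNReal.ofReal t := by
        rcases le_or_gt 0 t with ht | ht
        · rw [← ENNReal.ofReal_natCast]
          exact ENNReal.ofReal_le_ofReal (Nat.floor_le ht)
        · simp [Nat.floor_of_nonpos ht.le]

/-- geometric bound -/
lemma geom_le_one : (∑' j : ℕ, ENNReal.ofReal ((1/5) * (Real.sqrt 2 / 2)^j)) ≤ 1 := by
  have hq : (0:ℝ) ≤ Real.sqrt 2 / 2 := by positivity
  have hq45 : Real.sqrt 2 / 2 ≤ 4/5 := by
    nlinarith [Real.sq_sqrt (by norm_num : (2:ℝ) ≥ 0), Real.sqrt_nonneg 2]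
  calc (∑' j : ℕ, ENNReal.ofReal ((1/5) * (Real.sqrt 2 / 2)^j))
      ≤ ∑' j : ℕ, ENNReal.ofReal (1/5) * ENNReal.ofReal (4/5)^j := by
        apply ENNReal.tsum_le_tsum
        intro j
        rw [← ENNReal.ofReal_pow (by norm_num), ← ENNReal.ofReal_mul (by norm_num)]
        apply ENNReal.ofReal_le_ofReal
        have : (Real.sqrt 2 / 2)^j ≤ (4/5:ℝ)^j := pow_le_pow_left₀ hq hq45 j
        nlinarith
    _ = ENNReal.ofReal (1/5) * (1 - ENNReal.ofReal (4/5))⁻¹ := by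
        rw [ENNReal.tsum_mul_left, ENNReal.tsum_geometric]
    _ = 1 := by
        rw [show (1:ℝ≥0∞) - ENNReal.ofReal (4/5) = ENNReal.ofReal (1/5) by
            rw [← ENNReal.ofReal_one, ← ENNReal.ofReal_sub _ (by norm_num)]; norm_num]
        rw [← ENNReal.ofReal_inv_of_pos (by norm_num), ← ENNReal.ofReal_mul (by norm_num)]
        norm_num

/-! ### Level sets of `g` -/

/-- level sets of `g` -/
def PSet {d : ℕ} (g : Torus d → ℝ) (j : ℕ) : Set (Torus d) :=
  {x | (j:ℝ) ≤ g x * (4 / Real.log 2)}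

lemma PSet_measurable {d : ℕ} {g : Torus d → ℝ} (hg : Measurable g) (j : ℕ) :
    MeasurableSet (PSet g j) :=
  (hg.mul_const _) measurableSet_Ici

lemma sum_vol_P {d : ℕ} (g : Torus d → ℝ) (hg : Measurable g) :
    (∑' k : ℕ, volume (PSet g (k+1))) ≤
      ENNReal.ofReal (4 / Real.log 2) * ∫⁻ x, ENNReal.ofReal (g x) := by
  have hc : (0:ℝ) ≤ 4 / Real.log 2 := by
    have := Real.log_pos (by norm_num : (1:ℝ) < 2); positivity
  calc (∑' k : ℕ, volume (PSet g (k+1)))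
      = ∑' k : ℕ, ∫⁻ x, (PSet g (k+1)).indicator (fun _ => (1:ℝ≥0∞)) x := by
        refine tsum_congr fun k => ?_
        rw [show ((fun _ : Torus d => (1:ℝ≥0∞))) = (1 : Torus d → ℝ≥0∞) from rfl,
          lintegral_indicator_one (PSet_measurable hg (k+1))]
    _ = ∫⁻ x, ∑' k : ℕ, (PSet g (k+1)).indicator (fun _ => (1:ℝ≥0∞)) x := by
        rw [lintegral_tsum]
        intro k
        exact ((measurable_const.indicator (PSet_measurable hg (k+1)))).aemeasurable
    _ ≤ ∫⁻ x, ENNReal.ofReal (g x * (4 / Real.log 2)) := by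
        apply lintegral_mono
        intro x
        calc (∑' k : ℕ, (PSet g (k+1)).indicator (fun _ => (1:ℝ≥0∞)) x)
            = ∑' k : ℕ, if ((k:ℝ)+1) ≤ g x * (4 / Real.log 2) then (1:ℝ≥0∞) else 0 := by
              refine tsum_congr fun k => ?_
              by_cases hm : x ∈ PSet g (k+1)
              · rw [Set.indicator_of_mem hm, if_pos (by exact_mod_cast hm)]
              · rw [Set.indicator_of_notMem hm, if_neg (fun hc' => hm (by exact_mod_cast hc'))]
          _ ≤ ENNReal.ofReal (g x * (4 / Real.log 2)) := tsum_indicator_le _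
    _ = ENNReal.ofReal (4 / Real.log 2) * ∫⁻ x, ENNReal.ofReal (g x) := by
        have : ∀ x : Torus d, ENNReal.ofReal (g x * (4 / Real.log 2))
            = ENNReal.ofReal (g x) * ENNReal.ofReal (4 / Real.log 2) :=
          fun x => ENNReal.ofReal_mul' hc
        simp_rw [this]
        rw [lintegral_mul_const' _ _ ENNReal.ofReal_ne_top, mul_comm]

/-! ### The truncated Lipschitz factor -/

def uF {d : ℕ} (g : Torus d → ℝ) (j : ℕ) (z : Torus d) : ℝ :=
  min (Real.exp (2 * g z) * sR j) 2

lemma uF_nonneg {d : ℕ} (g : Torus d → ℝ) (j : ℕ) (z : Torus d) : 0 ≤ uF g j z :=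
  le_min (mul_nonneg (Real.exp_nonneg _) (sR_pos j).le) (by norm_num)

lemma uF_measurable {d : ℕ} {g : Torus d → ℝ} (hg : Measurable g) (j : ℕ) :
    Measurable (uF g j) := by
  apply Measurable.min _ measurable_const
  exact ((hg.const_mul 2).exp.mul_const _)

/-- outside `PSet g j`, `uF g j` is geometrically small -/
lemma uF_lt_of_not_mem {d : ℕ} {g : Torus d → ℝ} {j : ℕ} {z : Torus d}
    (hz : z ∉ PSet g j) : uF g j z ≤ (1/5) * (Real.sqrt 2 / 2)^j := by
  have hlog : 0 < Real.log 2 := Real.log_pos (by norm_num)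
  have h1 : g z * (4 / Real.log 2) < j := lt_of_not_ge hz
  have h2 : 2 * g z < (j:ℝ) * (Real.log 2 / 2) := by
    have h4 : g z * (4 / Real.log 2) * (Real.log 2 / 2) < (j:ℝ) * (Real.log 2 / 2) :=
      mul_lt_mul_of_pos_right h1 (by positivity)
    have h5 : g z * (4 / Real.log 2) * (Real.log 2 / 2) = 2 * g z := by
      field_simp; ring
    linarith
  have h3 : Real.exp (2 * g z) ≤ (Real.sqrt 2)^j := by
    calc Real.exp (2 * g z) ≤ Real.exp ((j:ℝ) * Real.log (Real.sqrt 2)) := by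
          apply Real.exp_le_exp.mpr
          rw [Real.log_sqrt (by norm_num)]
          linarith
      _ = (Real.sqrt 2)^j := by
          rw [← Real.log_pow, Real.exp_log (by positivity)]
  calc uF g j z ≤ Real.exp (2 * g z) * sR j := min_le_left _ _
    _ ≤ (Real.sqrt 2)^j * ((1/5) * (1/2)^j) := by
        apply mul_le_mul h3 le_rfl (sR_pos j).le (by positivity)
    _ = (1/5) * (Real.sqrt 2 / 2)^j := by
        rw [div_pow, one_pow, div_pow]
        ring

/-! ### The main per-scale estimate -/

def Rj {d : ℕ} (f g : Torus d → ℝ) (j : ℕ) : ℝ≥0∞ :=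
  2 * min (volume (PSet g j)) (∫⁻ x, ENNReal.ofReal |f x|) +
    ENNReal.ofReal ((1/5) * (Real.sqrt 2 / 2)^j) * (∫⁻ x, ENNReal.ofReal |f x|)

lemma lint_abs_shift {d : ℕ} (f : Torus d → ℝ) (c : Torus d) :
    (∫⁻ x, ENNReal.ofReal |f (x + c)|) = ∫⁻ x, ENNReal.ofReal |f x| :=
  lintegral_add_right_eq_self (fun z => ENNReal.ofReal |f z|) c

lemma lemA {d : ℕ} (f g : Torus d → ℝ) (hgm : Measurable g)
    (hf1 : ∀ x, |f x| ≤ 1) (j : ℕ) (σ τ : Torus d) :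
    (∫⁻ x, ENNReal.ofReal (uF g j (x + σ)) * ENNReal.ofReal |f (x + τ)|) ≤ Rj f g j := by
  have htr : (∫⁻ x, ENNReal.ofReal (uF g j (x + σ)) * ENNReal.ofReal |f (x + τ)|)
      = ∫⁻ x, ENNReal.ofReal (uF g j x) * ENNReal.ofReal |f (x + (τ - σ))| := by
    have h0 := lintegral_add_right_eq_self (μ := (volume : Measure (Torus d)))
      (fun z => ENNReal.ofReal (uF g j z) * ENNReal.ofReal (|f (z + (τ - σ))|)) σ
    rw [← h0]
    congr 1
    funext x
    congr 2
    abel_nf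
  rw [htr]
  set c := τ - σ with hc
  set Φ := ∫⁻ x, ENNReal.ofReal |f x| with hΦ
  rw [← lintegral_add_compl _ (PSet_measurable hgm j)]
  unfold Rj
  apply add_le_add
  · -- on PSet
    have hu2 : ∀ x : Torus d, ENNReal.ofReal (uF g j x) ≤ 2 := by
      intro x
      have := ENNReal.ofReal_le_ofReal (min_le_right (Real.exp (2 * g x) * sR j) 2)
      simpa [uF] using this
    have hb : (∫⁻ x in PSet g j, ENNReal.ofReal (uF g j x) * ENNReal.ofReal |f (x + c)|)
        ≤ ∫⁻ x in PSet g j, 2 * ENNReal.ofReal |f (x + c)| :=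
      lintegral_mono fun x => mul_le_mul_left (hu2 x) _
    have hP1 : (∫⁻ x in PSet g j, ENNReal.ofReal (uF g j x) * ENNReal.ofReal |f (x + c)|)
        ≤ 2 * volume (PSet g j) := by
      refine hb.trans ?_
      calc (∫⁻ x in PSet g j, 2 * ENNReal.ofReal |f (x + c)|)
          ≤ ∫⁻ _x in PSet g j, 2 * 1 := by
            apply lintegral_mono
            intro x
            exact mul_le_mul_right (ENNReal.ofReal_le_one.mpr (hf1 _)) _
        _ = 2 * volume (PSet g j) := by
            rw [setLIntegral_const]
            ring
    have hP2 : (∫⁻ x in PSet g j, ENNReal.ofReal (uF g j x) * ENNReal.ofReal |f (x + c)|)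
        ≤ 2 * Φ := by
      refine hb.trans ?_
      calc (∫⁻ x in PSet g j, 2 * ENNReal.ofReal |f (x + c)|)
          ≤ ∫⁻ x, 2 * ENNReal.ofReal |f (x + c)| := setLIntegral_le_lintegral _ _
        _ = 2 * Φ := by rw [lintegral_const_mul' _ _ (by norm_num), lint_abs_shift]
    rcases le_total (volume (PSet g j)) Φ with hm | hm
    · rw [min_eq_left hm]; exact hP1
    · rw [min_eq_right hm]; exact hP2
  · -- complement
    calc (∫⁻ x in (PSet g j)ᶜ, ENNReal.ofReal (uF g j x) * ENNReal.ofReal |f (x + c)|)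
        ≤ ∫⁻ x in (PSet g j)ᶜ,
            ENNReal.ofReal ((1/5) * (Real.sqrt 2 / 2)^j) * ENNReal.ofReal |f (x + c)| := by
          apply setLIntegral_mono' (PSet_measurable hgm j).compl
          intro x hx
          exact mul_le_mul_left (ENNReal.ofReal_le_ofReal (uF_lt_of_not_mem hx)) _
      _ ≤ ∫⁻ x, ENNReal.ofReal ((1/5) * (Real.sqrt 2 / 2)^j) * ENNReal.ofReal |f (x + c)| :=
          setLIntegral_le_lintegral _ _
      _ = ENNReal.ofReal ((1/5) * (Real.sqrt 2 / 2)^j) * Φ := by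
          rw [lintegral_const_mul' _ _ ENNReal.ofReal_ne_top, lint_abs_shift]

/-! ### Pointwise real inequality -/

lemma min_add_min (X Y Z : ℝ) (hX : 0 ≤ X) (hY : 0 ≤ Y) (hZ : Z ≤ X + Y) :
    min Z 2 ≤ min X 2 + min Y 2 := by
  rcases le_total X 2 with h1 | h1 <;> rcases le_total Y 2 with h2 | h2
  · rw [min_eq_left h1, min_eq_left h2]
    exact (min_le_left Z 2).trans hZ
  · rw [min_eq_left h1, min_eq_right h2]
    linarith [min_le_right Z 2]
  · rw [min_eq_right h1, min_eq_left h2]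
    linarith [min_le_right Z 2]
  · rw [min_eq_right h1, min_eq_right h2]
    linarith [min_le_right Z 2]

lemma real_key (lx ly t p q δ : ℝ) (ht : 0 ≤ t)
    (hδ1 : |δ| ≤ Real.exp (lx + ly) * t) (hδ2 : |δ| ≤ p + q)
    (hp : 0 ≤ p) (hq : 0 ≤ q) (hp1 : p ≤ 1) (hq1 : q ≤ 1) :
    δ^2 ≤ (min (Real.exp (2*lx) * t) 2 + min (Real.exp (2*ly) * t) 2) * (p + q) := by
  have hex : Real.exp (lx + ly) ≤ Real.exp (2*lx) + Real.exp (2*ly) := by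
    have e1 : Real.exp (lx + ly) = Real.exp lx * Real.exp ly := Real.exp_add _ _
    have e2 : Real.exp (2*lx) = Real.exp lx * Real.exp lx := by rw [two_mul, Real.exp_add]
    have e3 : Real.exp (2*ly) = Real.exp ly * Real.exp ly := by rw [two_mul, Real.exp_add]
    nlinarith [Real.exp_pos lx, Real.exp_pos ly, sq_nonneg (Real.exp lx - Real.exp ly)]
  have hδm : |δ| ≤ min (Real.exp (lx + ly) * t) 2 := le_min hδ1 (hδ2.trans (by linarith))
  have hmm : min (Real.exp (lx + ly) * t) 2
      ≤ min (Real.exp (2*lx) * t) 2 + min (Real.exp (2*ly) * t) 2 := by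
    apply min_add_min _ _ _ (by positivity) (by positivity)
    nlinarith [Real.exp_pos (lx+ly)]
  have h2 : δ^2 = |δ| * |δ| := by rw [abs_mul_abs_self δ]; ring
  rw [h2]
  have hmn : (0:ℝ) ≤ min (Real.exp (lx + ly) * t) 2 := le_min (by positivity) (by norm_num)
  calc |δ| * |δ| ≤ min (Real.exp (lx + ly) * t) 2 * (p + q) :=
        mul_le_mul hδm hδ2 (abs_nonneg δ) hmn
    _ ≤ (min (Real.exp (2*lx) * t) 2 + min (Real.exp (2*ly) * t) 2) * (p + q) :=
        mul_le_mul_of_nonneg_right hmm (by linarith)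

/-! ### The per-`h` estimate -/

lemma perh {d : ℕ} (f g : Torus d → ℝ) (hfm : Measurable f) (hgm : Measurable g)
    (hf1 : ∀ x, |f x| ≤ 1) (j : ℕ) (h : Torus d) (hh : h ∈ Ann d j)
    (hlip : ∀ᵐ x : Torus d ∂volume, |f (x + h) - f x| ≤ Real.exp (g x + g (x + h)) * ‖h‖) :
    (∫⁻ x, ENNReal.ofReal (|f (x + h) - f x| ^ 2 / ‖h‖ ^ d))
      ≤ ENNReal.ofReal (((5:ℝ) * 2 ^ (j+1)) ^ d) * (4 * Rj f g j) := by
  obtain ⟨hl, hu⟩ := hh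
  set K : ℝ := (5:ℝ) * 2 ^ (j+1) with hK
  have hKpos : (0:ℝ) < K := by rw [hK]; positivity
  have hKs : K * sR (j+1) = 1 := by
    have h2 : (2:ℝ)^(j+1) * (1/2)^(j+1) = 1 := by
      rw [← mul_pow]; norm_num
    rw [hK]; unfold sR; nlinarith
  have hnpos : 0 < ‖h‖ := lt_trans (sR_pos (j+1)) hl
  have hKh : 1 ≤ K * ‖h‖ := by
    calc (1:ℝ) = K * sR (j+1) := hKs.symm
      _ ≤ K * ‖h‖ := by apply mul_le_mul_of_nonneg_left hl.le hKpos.le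
  -- pointwise a.e. bound
  have key : ∀ᵐ x ∂(volume : Measure (Torus d)),
      ENNReal.ofReal (|f (x + h) - f x| ^ 2 / ‖h‖ ^ d)
        ≤ ENNReal.ofReal (K ^ d) *
          ((ENNReal.ofReal (uF g j x) + ENNReal.ofReal (uF g j (x + h))) *
           (ENNReal.ofReal |f x| + ENNReal.ofReal |f (x + h)|)) := by
    filter_upwards [hlip] with x hx
    rw [sq_abs]
    have humono : ∀ z : Torus d, min (Real.exp (2 * g z) * ‖h‖) 2 ≤ uF g j z := by
      intro z
      exact min_le_min (mul_le_mul_of_nonneg_left hu (Real.exp_nonneg _)) le_rfl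
    have h1 : (f (x + h) - f x) ^ 2
        ≤ (uF g j x + uF g j (x + h)) * (|f x| + |f (x + h)|) := by
      have hrk := real_key (g x) (g (x + h)) ‖h‖ (|f x|) (|f (x + h)|)
        (f (x + h) - f x) (norm_nonneg h) hx
        ((abs_sub (f (x + h)) (f x)).trans_eq (add_comm _ _))
        (abs_nonneg _) (abs_nonneg _) (hf1 x) (hf1 (x + h))
      refine hrk.trans ?_
      apply mul_le_mul_of_nonneg_right (add_le_add (humono x) (humono (x + h)))
      positivity
    have h2 : (f (x + h) - f x) ^ 2 / ‖h‖ ^ d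
        ≤ K ^ d * ((uF g j x + uF g j (x + h)) * (|f x| + |f (x + h)|)) := by
      have hpow : (1:ℝ) ≤ K ^ d * ‖h‖ ^ d := by
        rw [← mul_pow]
        exact one_le_pow₀ hKh
      have hd1 : (f (x + h) - f x) ^ 2 / ‖h‖ ^ d ≤ K ^ d * (f (x + h) - f x) ^ 2 := by
        rw [div_le_iff₀ (by positivity)]
        nlinarith [sq_nonneg (f (x + h) - f x), pow_nonneg hKpos.le d]
      refine hd1.trans ?_
      exact mul_le_mul_of_nonneg_left h1 (by positivity)
    calc ENNReal.ofReal ((f (x + h) - f x) ^ 2 / ‖h‖ ^ d)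
        ≤ ENNReal.ofReal (K ^ d * ((uF g j x + uF g j (x + h)) * (|f x| + |f (x + h)|))) :=
          ENNReal.ofReal_le_ofReal h2
      _ = ENNReal.ofReal (K ^ d) *
          ((ENNReal.ofReal (uF g j x) + ENNReal.ofReal (uF g j (x + h))) *
           (ENNReal.ofReal |f x| + ENNReal.ofReal |f (x + h)|)) := by
          rw [ENNReal.ofReal_mul (by positivity),
            ENNReal.ofReal_mul (add_nonneg (uF_nonneg g j x) (uF_nonneg g j (x+h))),
            ENNReal.ofReal_add (uF_nonneg g j x) (uF_nonneg g j (x+h)),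
            ENNReal.ofReal_add (abs_nonneg _) (abs_nonneg _)]
  -- integrate
  have hm0 : Measurable (fun x : Torus d => ENNReal.ofReal (uF g j x)) :=
    (uF_measurable hgm j).ennreal_ofReal
  have hmh : Measurable (fun x : Torus d => ENNReal.ofReal (uF g j (x + h))) :=
    ((uF_measurable hgm j).comp (measurable_add_const h)).ennreal_ofReal
  have hf0 : Measurable (fun x : Torus d => ENNReal.ofReal |f x|) :=
    hfm.abs.ennreal_ofReal
  have hfh : Measurable (fun x : Torus d => ENNReal.ofReal |f (x + h)|) :=
    ((hfm.comp (measurable_add_const h))).abs.ennreal_ofReal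
  calc (∫⁻ x, ENNReal.ofReal (|f (x + h) - f x| ^ 2 / ‖h‖ ^ d))
      ≤ ∫⁻ x, ENNReal.ofReal (K ^ d) *
          ((ENNReal.ofReal (uF g j x) + ENNReal.ofReal (uF g j (x + h))) *
           (ENNReal.ofReal |f x| + ENNReal.ofReal |f (x + h)|)) := lintegral_mono_ae key
    _ = ENNReal.ofReal (K ^ d) * ∫⁻ x,
          ((ENNReal.ofReal (uF g j x) + ENNReal.ofReal (uF g j (x + h))) *
           (ENNReal.ofReal |f x| + ENNReal.ofReal |f (x + h)|)) :=
        lintegral_const_mul' _ _ ENNReal.ofReal_ne_top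
    _ ≤ ENNReal.ofReal (K ^ d) * (4 * Rj f g j) := by
        apply mul_le_mul_right
        have hexp : ∀ x : Torus d,
            (ENNReal.ofReal (uF g j x) + ENNReal.ofReal (uF g j (x + h))) *
             (ENNReal.ofReal |f x| + ENNReal.ofReal |f (x + h)|)
            = ENNReal.ofReal (uF g j x) * ENNReal.ofReal |f x|
              + ENNReal.ofReal (uF g j x) * ENNReal.ofReal |f (x + h)|
              + ENNReal.ofReal (uF g j (x + h)) * ENNReal.ofReal |f x|
              + ENNReal.ofReal (uF g j (x + h)) * ENNReal.ofReal |f (x + h)| := by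
          intro x; ring
        rw [lintegral_congr hexp]
        rw [lintegral_add_left (((hm0.fun_mul hf0).fun_add (hm0.fun_mul hfh)).fun_add (hmh.fun_mul hf0)) _,
          lintegral_add_left ((hm0.fun_mul hf0).fun_add (hm0.fun_mul hfh)) _,
          lintegral_add_left (hm0.fun_mul hf0) _]
        have bA : (∫⁻ x, ENNReal.ofReal (uF g j x) * ENNReal.ofReal |f x|) ≤ Rj f g j := by
          simpa using lemA f g hgm hf1 j 0 0
        have bB : (∫⁻ x, ENNReal.ofReal (uF g j x) * ENNReal.ofReal |f (x + h)|) ≤ Rj f g j := by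
          simpa using lemA f g hgm hf1 j 0 h
        have bC : (∫⁻ x, ENNReal.ofReal (uF g j (x + h)) * ENNReal.ofReal |f x|) ≤ Rj f g j := by
          simpa using lemA f g hgm hf1 j h 0
        have bD : (∫⁻ x, ENNReal.ofReal (uF g j (x + h)) * ENNReal.ofReal |f (x + h)|)
            ≤ Rj f g j := by
          simpa using lemA f g hgm hf1 j h h
        calc (∫⁻ x, ENNReal.ofReal (uF g j x) * ENNReal.ofReal |f x|)
              + (∫⁻ x, ENNReal.ofReal (uF g j x) * ENNReal.ofReal |f (x + h)|)
              + (∫⁻ x, ENNReal.ofReal (uF g j (x + h)) * ENNReal.ofReal |f x|)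
              + (∫⁻ x, ENNReal.ofReal (uF g j (x + h)) * ENNReal.ofReal |f (x + h)|)
            ≤ Rj f g j + Rj f g j + Rj f g j + Rj f g j :=
              add_le_add (add_le_add (add_le_add bA bB) bC) bD
          _ = 4 * Rj f g j := by ring

/-! ### Core estimate -/

theorem core {d : ℕ} (f g : Torus d → ℝ) (hfm : Measurable f) (hgm : Measurable g)
    (hf1 : ∀ x, |f x| ≤ 1)
    (hlip : ∀ h : Torus d, ∀ᵐ x : Torus d ∂volume,
      |f (x + h) - f x| ≤ Real.exp (g x + g (x + h)) * ‖h‖) :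
    HlogSq f ≤ ENNReal.ofReal (60 * 4 ^ d) *
      ((∫⁻ x, ENNReal.ofReal (g x)) + ∫⁻ x, ENNReal.ofReal |f x|) := by
  classical
  set Λ := ∫⁻ x, ENNReal.ofReal (g x) with hΛ
  set Φ := ∫⁻ x, ENNReal.ofReal |f x| with hΦ
  set B : Set (Torus d) := Metric.ball (0 : Torus d) (1/5) with hB
  set cj : ℕ → ℝ≥0∞ :=
    fun j => ENNReal.ofReal (((5:ℝ) * 2 ^ (j+1)) ^ d) * (4 * Rj f g j) with hcj
  set G : Torus d → ℝ≥0∞ := fun h => ∑' j, (Ann d j).indicator (fun _ => cj j) h with hG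
  have hGmeas : Measurable G :=
    Measurable.ennreal_tsum (fun j => measurable_const.indicator (Ann_measurable d j))
  have hDmeas : Measurable (fun p : Torus d × Torus d =>
      ENNReal.ofReal (|f (p.1 + p.2) - f p.1| ^ 2 / ‖p.2‖ ^ d)) := by
    apply Measurable.ennreal_ofReal
    apply Measurable.div
    · exact (((hfm.comp (measurable_fst.add measurable_snd)).sub
        (hfm.comp measurable_fst)).abs).pow_const 2
    · exact (measurable_snd.norm).pow_const d
  have hswap : HlogSq f
      = ∫⁻ h in B, ∫⁻ x, ENNReal.ofReal (|f (x + h) - f x| ^ 2 / ‖h‖ ^ d) := by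
    unfold HlogSq
    exact lintegral_lintegral_swap hDmeas.aemeasurable
  have hsec : ∀ h ∈ B,
      (∫⁻ x, ENNReal.ofReal (|f (x + h) - f x| ^ 2 / ‖h‖ ^ d)) ≤ G h := by
    intro h hhB
    by_cases h0 : h = 0
    · subst h0
      have hz : ∀ x : Torus d,
          ENNReal.ofReal (|f (x + 0) - f x| ^ 2 / ‖(0:Torus d)‖ ^ d) = 0 := by
        intro x; simp
      simp only [hz]
      rw [lintegral_zero]
      exact zero_le
    · have hnb : ‖h‖ < 1/5 := by
        have := Metric.mem_ball.mp hhB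
        rwa [dist_zero_right] at this
      obtain ⟨j, hj⟩ := exists_ann h h0 hnb
      calc (∫⁻ x, ENNReal.ofReal (|f (x + h) - f x| ^ 2 / ‖h‖ ^ d))
          ≤ cj j := perh f g hfm hgm hf1 j h hj (hlip h)
        _ = (Ann d j).indicator (fun _ => cj j) h := (Set.indicator_of_mem hj (fun _ => cj j)).symm
        _ ≤ G h := ENNReal.le_tsum j
  have hsum1 : (∫⁻ h, G h) ≤ ∑' j, cj j * ENNReal.ofReal ((2 * sR j)^d) := by
    rw [hG]
    rw [lintegral_tsum
      (fun j => (measurable_const.indicator (Ann_measurable d j)).aemeasurable)]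
    apply ENNReal.tsum_le_tsum
    intro j
    rw [lintegral_indicator_const (Ann_measurable d j)]
    exact mul_le_mul_right (vol_ann_le j) _
  have hcjv : ∀ j, cj j * ENNReal.ofReal ((2 * sR j)^d)
      = ENNReal.ofReal ((4:ℝ)^d) * (4 * Rj f g j) := by
    intro j
    have h2 : (2:ℝ)^j * (1/2)^j = 1 := by rw [← mul_pow]; norm_num
    have hid : ((5:ℝ) * 2 ^ (j+1)) * (2 * sR j) = 4 := by
      unfold sR; rw [pow_succ]; nlinarith
    have hKd : ((5:ℝ) * 2 ^ (j+1)) ^ d * (2 * sR j) ^ d = (4:ℝ)^d := by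
      rw [← mul_pow, hid]
    calc cj j * ENNReal.ofReal ((2 * sR j)^d)
        = ENNReal.ofReal (((5:ℝ) * 2 ^ (j+1)) ^ d) * ENNReal.ofReal ((2 * sR j)^d)
            * (4 * Rj f g j) := by rw [hcj]; ring
      _ = ENNReal.ofReal (((5:ℝ) * 2 ^ (j+1)) ^ d * (2 * sR j)^d) * (4 * Rj f g j) := by
          rw [← ENNReal.ofReal_mul (by positivity)]
      _ = ENNReal.ofReal ((4:ℝ)^d) * (4 * Rj f g j) := by rw [hKd]
  have hRsum : (∑' j, Rj f g j) ≤ 12 * (Λ + Φ) := by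
    unfold Rj
    rw [ENNReal.tsum_add]
    have hb1 : (∑' j, 2 * min (volume (PSet g j)) Φ) ≤ 2 * (Φ + 6 * Λ) := by
      rw [ENNReal.tsum_mul_left]
      apply mul_le_mul_right
      have hsplit : (∑' j, min (volume (PSet g j)) Φ)
          = min (volume (PSet g 0)) Φ + ∑' k, min (volume (PSet g (k+1))) Φ :=
        tsum_eq_zero_add' ENNReal.summable
      rw [hsplit]
      apply add_le_add (min_le_right _ _)
      calc (∑' k, min (volume (PSet g (k+1))) Φ)
          ≤ ∑' k, volume (PSet g (k+1)) := ENNReal.tsum_le_tsum fun k => min_le_left _ _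
        _ ≤ ENNReal.ofReal (4 / Real.log 2) * Λ := sum_vol_P g hgm
        _ ≤ 6 * Λ := by
            apply mul_le_mul_left
            have hlog : (0:ℝ) < Real.log 2 := Real.log_pos (by norm_num)
            have h9 : (0.6931471803:ℝ) < Real.log 2 := Real.log_two_gt_d9
            have : (4:ℝ) / Real.log 2 ≤ 6 := by
              rw [div_le_iff₀ hlog]; nlinarith
            calc ENNReal.ofReal (4 / Real.log 2) ≤ ENNReal.ofReal 6 :=
                  ENNReal.ofReal_le_ofReal this
              _ = 6 := by simp
    have hb2 : (∑' j, ENNReal.ofReal ((1/5) * (Real.sqrt 2 / 2)^j) * Φ) ≤ Φ := by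
      rw [ENNReal.tsum_mul_right]
      calc (∑' j, ENNReal.ofReal ((1/5) * (Real.sqrt 2 / 2)^j)) * Φ ≤ 1 * Φ :=
            mul_le_mul_left geom_le_one _
        _ = Φ := one_mul _
    calc (∑' j, 2 * min (volume (PSet g j)) Φ)
          + ∑' j, ENNReal.ofReal ((1/5) * (Real.sqrt 2 / 2)^j) * Φ
        ≤ 2 * (Φ + 6 * Λ) + Φ := add_le_add hb1 hb2
      _ = 3 * Φ + 12 * Λ := by ring
      _ ≤ 12 * Φ + 12 * Λ := by
          apply add_le_add_left
          apply mul_le_mul_left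
          norm_num
      _ = 12 * (Λ + Φ) := by ring
  calc HlogSq f
      = ∫⁻ h in B, ∫⁻ x, ENNReal.ofReal (|f (x + h) - f x| ^ 2 / ‖h‖ ^ d) := hswap
    _ ≤ ∫⁻ h in B, G h := setLIntegral_mono hGmeas hsec
    _ ≤ ∫⁻ h, G h := setLIntegral_le_lintegral _ _
    _ ≤ ∑' j, cj j * ENNReal.ofReal ((2 * sR j)^d) := hsum1
    _ = ∑' j, ENNReal.ofReal ((4:ℝ)^d) * (4 * Rj f g j) := tsum_congr hcjv
    _ = ENNReal.ofReal ((4:ℝ)^d) * (4 * ∑' j, Rj f g j) := by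
        rw [ENNReal.tsum_mul_left, ENNReal.tsum_mul_left]
    _ ≤ ENNReal.ofReal ((4:ℝ)^d) * (4 * (12 * (Λ + Φ))) := by
        apply mul_le_mul_right
        exact mul_le_mul_right hRsum _
    _ ≤ ENNReal.ofReal (60 * 4 ^ d) * (Λ + Φ) := by
        rw [show (4 : ℝ≥0∞) * (12 * (Λ + Φ)) = 48 * (Λ + Φ) by ring, ← mul_assoc]
        apply mul_le_mul_left
        calc ENNReal.ofReal ((4:ℝ)^d) * 48
            = ENNReal.ofReal ((4:ℝ)^d) * ENNReal.ofReal 48 := by norm_num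
          _ = ENNReal.ofReal ((4:ℝ)^d * 48) := by
              rw [← ENNReal.ofReal_mul (by positivity)]
          _ ≤ ENNReal.ofReal (60 * 4 ^ d) := by
              apply ENNReal.ofReal_le_ofReal
              nlinarith [pow_pos (by norm_num : (0:ℝ) < 4) d]

end HB

/-- if `f ∈ L¹ ∩ L^∞(𝕋^d)` with `‖f‖_{L^∞} ≤ 1` and `g ∈ L¹(𝕋^d)`
satisfy the Lusin–Lipschitz bound `|f(x) − f(y)| ≤ e^{g(x)+g(y)} d(x,y)`, then
`‖f‖²_{Ḣ_log} ≤ C(d) (‖g‖_{L¹} + ‖f‖_{L¹})`. -/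
theorem hlog_bound_of_lusin_lipschitz (d : ℕ) :
    ∃ C : ℝ, 0 < C ∧ ∀ (f g : Torus d → ℝ),
      Integrable f (volume : Measure (Torus d)) →
      MemLp f ⊤ (volume : Measure (Torus d)) →
      eLpNorm f ⊤ (volume : Measure (Torus d)) ≤ 1 →
      Integrable g (volume : Measure (Torus d)) →
      (∀ x y, |f x - f y| ≤ Real.exp (g x + g y) * dist x y) →
      HlogSq f ≤ ENNReal.ofReal
        (C * ((∫ x, |g x| ∂(volume : Measure (Torus d))) +
              (∫ x, |f x| ∂(volume : Measure (Torus d))))) := by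
  classical
  refine ⟨60 * 4 ^ d, by positivity, ?_⟩
  intro f g hIf _hMf hSf hIg hLip
  -- measurable representatives
  have hfa : AEMeasurable f (volume : Measure (Torus d)) := hIf.1.aemeasurable
  have hga : AEMeasurable g (volume : Measure (Torus d)) := hIg.1.aemeasurable
  set f1 := hfa.mk f with hf1def
  have hf1meas : Measurable f1 := hfa.measurable_mk
  have hf1ae : f =ᵐ[volume] f1 := hfa.ae_eq_mk
  set g1 := hga.mk g with hg1def
  have hg1meas : Measurable g1 := hga.measurable_mk
  have hg1ae : g =ᵐ[volume] g1 := hga.ae_eq_mk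
  -- a.e. bound |f| ≤ 1
  have hfb : ∀ᵐ x ∂(volume : Measure (Torus d)), |f x| ≤ 1 := by
    have h1 := enorm_ae_le_eLpNormEssSup f (volume : Measure (Torus d))
    have h2 : eLpNormEssSup f (volume : Measure (Torus d)) ≤ 1 := by
      rwa [eLpNorm_exponent_top] at hSf
    filter_upwards [h1] with x hx
    have hx1 : ((‖f x‖₊ : ℝ≥0∞)) ≤ 1 := hx.trans h2
    have hx2 : ‖f x‖ ≤ 1 := by
      have := ENNReal.coe_le_one_iff.mp hx1
      exact_mod_cast this
    rwa [Real.norm_eq_abs] at hx2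
  -- truncation
  set F := fun x : Torus d => max (-1) (min 1 (f1 x)) with hFdef
  have hFmeas : Measurable F := measurable_const.max (measurable_const.min hf1meas)
  have hF1 : ∀ x, |F x| ≤ 1 := by
    intro x
    rw [abs_le]
    exact ⟨le_max_left _ _, max_le (by norm_num) (min_le_left _ _)⟩
  have htrunc : ∀ a b : ℝ, |max (-1) (min 1 a) - max (-1) (min 1 b)| ≤ |a - b| := by
    intro a b
    calc |max (-1) (min 1 a) - max (-1) (min 1 b)|
        = |max (min 1 a) (-1) - max (min 1 b) (-1)| := by rw [max_comm, max_comm (-1)]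
      _ ≤ |min 1 a - min 1 b| := abs_max_sub_max_le_abs _ _ _
      _ ≤ max |1 - 1| |a - b| := abs_min_sub_min_le_max _ _ _ _
      _ = |a - b| := by simp
  -- the good set
  have hE : ∀ᵐ x ∂(volume : Measure (Torus d)), f1 x = f x ∧ g1 x = g x ∧ |f x| ≤ 1 := by
    filter_upwards [hf1ae, hg1ae, hfb] with x h1 h2 h3
    exact ⟨h1.symm, h2.symm, h3⟩
  have hFeq : ∀ x : Torus d, f1 x = f x → |f x| ≤ 1 → F x = f x := by
    intro x h1 h2
    have := abs_le.mp h2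
    rw [hFdef]
    simp only [h1]
    rw [min_eq_right this.2, max_eq_right this.1]
  -- shifted a.e. sets
  have hshift : ∀ h : Torus d, ∀ᵐ x ∂(volume : Measure (Torus d)),
      f1 (x + h) = f (x + h) ∧ g1 (x + h) = g (x + h) ∧ |f (x + h)| ≤ 1 := by
    intro h
    rw [ae_iff] at hE ⊢
    have : {x : Torus d | ¬(f1 (x + h) = f (x + h) ∧ g1 (x + h) = g (x + h) ∧ |f (x + h)| ≤ 1)}
        = (fun x : Torus d => x + h) ⁻¹'
          {y : Torus d | ¬(f1 y = f y ∧ g1 y = g y ∧ |f y| ≤ 1)} := rfl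
    rw [this, measure_preimage_add_right]
    exact hE
  -- Lipschitz property for the modified pair
  have hlipF : ∀ h : Torus d, ∀ᵐ x ∂(volume : Measure (Torus d)),
      |F (x + h) - F x| ≤ Real.exp (g1 x + g1 (x + h)) * ‖h‖ := by
    intro h
    filter_upwards [hE, hshift h] with x hx hxh
    have hd : dist x (x + h) = ‖h‖ := by
      rw [dist_eq_norm]
      simp
    calc |F (x + h) - F x|
        = |max (-1) (min 1 (f1 (x + h))) - max (-1) (min 1 (f1 x))| := rfl
      _ ≤ |f1 (x + h) - f1 x| := htrunc _ _
      _ = |f (x + h) - f x| := by rw [hx.1, hxh.1]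
      _ ≤ Real.exp (g (x + h) + g x) * dist (x + h) x := hLip _ _
      _ = Real.exp (g1 x + g1 (x + h)) * ‖h‖ := by
          rw [hx.2.1, hxh.2.1, add_comm, dist_comm, hd]
  -- HlogSq congruence
  have hcong : HlogSq f = HlogSq F := by
    unfold HlogSq
    apply lintegral_congr_ae
    filter_upwards [hE] with x hx
    apply lintegral_congr_ae
    apply ae_restrict_of_ae
    have hsh : ∀ᵐ h ∂(volume : Measure (Torus d)),
        f1 (x + h) = f (x + h) ∧ g1 (x + h) = g (x + h) ∧ |f (x + h)| ≤ 1 := by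
      rw [ae_iff] at hE ⊢
      have : {h : Torus d | ¬(f1 (x + h) = f (x + h) ∧ g1 (x + h) = g (x + h)
          ∧ |f (x + h)| ≤ 1)}
          = (fun h : Torus d => x + h) ⁻¹'
            {y : Torus d | ¬(f1 y = f y ∧ g1 y = g y ∧ |f y| ≤ 1)} := rfl
      rw [this, measure_preimage_add]
      exact hE
    filter_upwards [hsh] with h hh
    rw [hFeq x hx.1 hx.2.2, hFeq (x + h) hh.1 hh.2.2]
  -- apply the core estimate
  have hcore := HB.core F g1 hFmeas hg1meas hF1 hlipF
  rw [hcong]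
  refine hcore.trans ?_
  -- convert the lintegrals
  have hgnonneg : (0:ℝ) ≤ ∫ x, |g x| ∂(volume : Measure (Torus d)) :=
    integral_nonneg fun x => abs_nonneg _
  have hfnonneg : (0:ℝ) ≤ ∫ x, |f x| ∂(volume : Measure (Torus d)) :=
    integral_nonneg fun x => abs_nonneg _
  have hgl : (∫⁻ x, ENNReal.ofReal (g1 x)) ≤
      ENNReal.ofReal (∫ x, |g x| ∂(volume : Measure (Torus d))) := by
    rw [ofReal_integral_eq_lintegral_ofReal hIg.abs
      (Filter.Eventually.of_forall fun x => abs_nonneg _)]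
    calc (∫⁻ x, ENNReal.ofReal (g1 x))
        = ∫⁻ x, ENNReal.ofReal (g x) := by
          apply lintegral_congr_ae
          filter_upwards [hg1ae] with x hx
          rw [hx]
      _ ≤ ∫⁻ x, ENNReal.ofReal |g x| := by
          apply lintegral_mono
          intro x
          exact ENNReal.ofReal_le_ofReal (le_abs_self _)
  have hfl : (∫⁻ x, ENNReal.ofReal |F x|) ≤
      ENNReal.ofReal (∫ x, |f x| ∂(volume : Measure (Torus d))) := by
    rw [ofReal_integral_eq_lintegral_ofReal hIf.abs
      (Filter.Eventually.of_forall fun x => abs_nonneg _)]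
    apply le_of_eq
    apply lintegral_congr_ae
    filter_upwards [hE] with x hx
    rw [hFeq x hx.1 hx.2.2]
  calc ENNReal.ofReal (60 * 4 ^ d) *
        ((∫⁻ x, ENNReal.ofReal (g1 x)) + ∫⁻ x, ENNReal.ofReal |F x|)
      ≤ ENNReal.ofReal (60 * 4 ^ d) *
        (ENNReal.ofReal (∫ x, |g x| ∂(volume : Measure (Torus d))) +
         ENNReal.ofReal (∫ x, |f x| ∂(volume : Measure (Torus d)))) := by
        exact mul_le_mul_right (add_le_add hgl hfl) _
    _ = ENNReal.ofReal ((60 * 4 ^ d) *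
        ((∫ x, |g x| ∂(volume : Measure (Torus d))) +
         (∫ x, |f x| ∂(volume : Measure (Torus d))))) := by
        rw [← ENNReal.ofReal_add hgnonneg hfnonneg, ← ENNReal.ofReal_mul (by positivity)]
end
end
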